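/- arXiv:2109.10528 — 6 statements merged into one kernel-verified Lean document; each statement's English description precedes it below -/
import Mathlib

section
/- Let σ > 0, Δ > 0, ε ≥ 0, and let μ, μ' ∈ ℝ satisfy |μ − μ'| ≤ Δ. Set ψ = Δ/σ. Then for every measurable set S ⊆ ℝ, the Gaussian measures P = N(μ, σ²) and Q = N(μ', σ²) satisfy P(S) ≤ e^ε · Q(S) + Φ(ψ/2 − ε/ψ). In particular, the Gaussian mechanism with noise standard deviation σ on a query of L2-sensitivity Δ is (ε, δ)-differentially private with δ = Φ(ψ/2 − ε/ψ). -/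
open MeasureTheory ProbabilityTheory Real
open scoped NNReal ENNReal

/-- `Φ`, the cumulative distribution function of the standard normal distribution. -/
noncomputable def stdNormalCDF (x : ℝ) : ℝ := ((gaussianReal 0 1) (Set.Iic x)).toReal

lemma stdNormalCDF_mono {x y : ℝ} (h : x ≤ y) : stdNormalCDF x ≤ stdNormalCDF y :=
  ENNReal.toReal_mono (measure_ne_top _ _) (measure_mono (Set.Iic_subset_Iic.mpr h))

lemma gaussian_map (m σ : ℝ) (hσ : 0 < σ) :
    (gaussianReal 0 1).map (fun x => σ * x + m) = gaussianReal m ⟨σ^2, sq_nonneg σ⟩ := by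
  have h1 : (gaussianReal 0 1).map (fun x => σ * x) = gaussianReal 0 ⟨σ^2, sq_nonneg σ⟩ := by
    rw [show (fun x : ℝ => σ * x) = (σ * ·) from rfl, gaussianReal_map_const_mul]
    congr 1
    · ring
    · ext; simp; rfl
  have h2 : (fun x : ℝ => σ * x + m) = (fun x : ℝ => x + m) ∘ (fun x : ℝ => σ * x) := rfl
  rw [h2, ← Measure.map_map (by fun_prop) (by fun_prop), h1,
    show (fun x : ℝ => x + m) = (· + m) from rfl]
  exact (gaussianReal_map_add_const (μ := 0) (v := ⟨σ^2, sq_nonneg σ⟩) m).trans (by rw [zero_add])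

lemma gaussian_Iic_le (m σ c : ℝ) (hσ : 0 < σ) :
    gaussianReal m ⟨σ^2, sq_nonneg σ⟩ (Set.Iic c)
      ≤ ENNReal.ofReal (stdNormalCDF ((c - m)/σ)) := by
  rw [← gaussian_map m σ hσ, Measure.map_apply (by fun_prop) measurableSet_Iic]
  have hpre : (fun x : ℝ => σ * x + m) ⁻¹' Set.Iic c = Set.Iic ((c - m)/σ) := by
    ext x
    simp only [Set.mem_preimage, Set.mem_Iic]
    rw [le_div_iff₀ hσ]
    constructor <;> intro h <;> nlinarith
  rw [hpre, stdNormalCDF, ENNReal.ofReal_toReal (measure_ne_top _ _)]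

lemma std_map_neg : (gaussianReal 0 1).map (fun x : ℝ => -1 * x) = gaussianReal 0 1 := by
  rw [show (fun x : ℝ => -1 * x) = ((-1 : ℝ) * ·) from rfl, gaussianReal_map_const_mul]
  congr 1
  · ring
  · ext; norm_num

lemma gaussian_Ici_le (m σ c : ℝ) (hσ : 0 < σ) :
    gaussianReal m ⟨σ^2, sq_nonneg σ⟩ (Set.Ici c)
      ≤ ENNReal.ofReal (stdNormalCDF ((m - c)/σ)) := by
  rw [← gaussian_map m σ hσ, Measure.map_apply (by fun_prop) measurableSet_Ici]
  have hpre : (fun x : ℝ => σ * x + m) ⁻¹' Set.Ici c = Set.Ici ((c - m)/σ) := by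
    ext x
    simp only [Set.mem_preimage, Set.mem_Ici]
    rw [div_le_iff₀ hσ]
    constructor <;> intro h <;> nlinarith
  rw [hpre, ← std_map_neg, Measure.map_apply (by fun_prop) measurableSet_Ici]
  have h2 : (fun x : ℝ => -1 * x) ⁻¹' Set.Ici ((c - m)/σ) = Set.Iic (-((c - m)/σ)) := by
    ext x
    simp only [Set.mem_preimage, Set.mem_Ici, Set.mem_Iic]
    constructor <;> intro h <;> linarith
  rw [h2, show -((c - m)/σ) = (m - c)/σ by ring,
    stdNormalCDF, ENNReal.ofReal_toReal (measure_ne_top _ _)]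

lemma mono_aux (σ Δ ε t ψ : ℝ) (hσ : 0 < σ) (hΔ : 0 < Δ) (hε : 0 ≤ ε) (ht : 0 < t)
    (htΔ : t ≤ Δ) (hψ : ψ = Δ / σ) : t / (2 * σ) - σ * ε / t ≤ ψ / 2 - ε / ψ := by
  rw [hψ]
  have hεψ : ε / (Δ / σ) = σ * ε / Δ := by rw [div_div_eq_mul_div]; ring
  have hψ2 : Δ / σ / 2 = Δ / (2 * σ) := by ring
  rw [hεψ, hψ2]
  have i1 : t / (2 * σ) ≤ Δ / (2 * σ) := by gcongr
  have i2 : σ * ε / Δ ≤ σ * ε / t := by gcongr <;> positivity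
  linarith

/-- for `σ > 0`, `Δ > 0`, `ε ≥ 0`, `|μ − μ'| ≤ Δ` and `ψ = Δ/σ`,
the Gaussian measures `P = N(μ, σ²)` and `Q = N(μ', σ²)` satisfy, for every
measurable `S ⊆ ℝ`, `P(S) ≤ e^ε · Q(S) + Φ(ψ/2 − ε/ψ)`: the Gaussian mechanism is
`(ε, δ)`-DP with `δ = Φ(ψ/2 − ε/ψ)`. -/
theorem gaussian_mechanism_eps_delta (σ Δ ε μ μ' ψ : ℝ) (hσ : 0 < σ) (hΔ : 0 < Δ)
    (hε : 0 ≤ ε) (hadj : |μ - μ'| ≤ Δ) (hψ : ψ = Δ / σ) :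
    ∀ S : Set ℝ, MeasurableSet S →
      (gaussianReal μ ⟨σ ^ 2, sq_nonneg σ⟩) S ≤
        ENNReal.ofReal (Real.exp ε) * (gaussianReal μ' ⟨σ ^ 2, sq_nonneg σ⟩) S +
          ENNReal.ofReal (stdNormalCDF (ψ / 2 - ε / ψ)) := by
  intro S hS
  set v : ℝ≥0 := ⟨σ ^ 2, sq_nonneg σ⟩ with hvdef
  have hv : v ≠ 0 := by
    rw [Ne, ← NNReal.coe_eq_zero]
    show ¬ (σ ^ 2 = 0)
    positivity
  obtain ⟨a, ha⟩ : ∃ t : ℝ, t = μ - μ' := ⟨_, rfl⟩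
  have haΔ : |a| ≤ Δ := ha ▸ hadj
  set B : Set ℝ := {x | 2 * σ ^ 2 * ε < a * (2 * x - μ - μ')} with hB
  have hBmeas : MeasurableSet B := measurableSet_lt measurable_const (by fun_prop)
  -- pointwise density bound off B
  have hpt : ∀ x ∉ B, gaussianPDF μ v x ≤ ENNReal.ofReal (rexp ε) * gaussianPDF μ' v x := by
    intro x hx
    simp only [hB, Set.mem_setOf_eq, not_lt] at hx
    rw [gaussianPDF, gaussianPDF, ← ENNReal.ofReal_mul (by positivity)]
    apply ENNReal.ofReal_le_ofReal
    rw [gaussianPDFReal, gaussianPDFReal]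
    have hAA' : -(x - μ) ^ 2 / (2 * (v:ℝ)) ≤ ε + -(x - μ') ^ 2 / (2 * (v:ℝ)) := by
      have hcv : (v : ℝ) = σ ^ 2 := rfl
      rw [hcv]
      have h2 : (0:ℝ) < 2 * σ ^ 2 := by positivity
      rw [div_le_iff₀ h2, add_mul, div_mul_cancel₀ _ (ne_of_gt h2)]
      have hid : (x - μ') ^ 2 - (x - μ) ^ 2 = a * (2 * x - μ - μ') := by rw [ha]; ring
      nlinarith [hx, hid]
    calc (√(2 * π * v))⁻¹ * rexp (-(x - μ) ^ 2 / (2 * v))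
        ≤ (√(2 * π * v))⁻¹ * rexp (ε + -(x - μ') ^ 2 / (2 * v)) :=
          mul_le_mul_of_nonneg_left (exp_le_exp.mpr hAA') (by positivity)
      _ = rexp ε * ((√(2 * π * v))⁻¹ * rexp (-(x - μ') ^ 2 / (2 * v))) := by
          rw [exp_add]; ring
  set P := gaussianReal μ v
  set Q := gaussianReal μ' v
  have hsplit : P S ≤ P (S ∩ Bᶜ) + P B :=
    calc P S = P ((S ∩ Bᶜ) ∪ (S ∩ B)) := by
          rw [← Set.inter_union_distrib_left, Set.compl_union_self, Set.inter_univ]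
      _ ≤ P (S ∩ Bᶜ) + P (S ∩ B) := measure_union_le _ _
      _ ≤ P (S ∩ Bᶜ) + P B := by gcongr; exact Set.inter_subset_right
  have h1 : P (S ∩ Bᶜ) ≤ ENNReal.ofReal (rexp ε) * Q S := by
    rw [show P = gaussianReal μ v from rfl, show Q = gaussianReal μ' v from rfl,
      gaussianReal_apply _ hv, gaussianReal_apply _ hv]
    calc ∫⁻ x in S ∩ Bᶜ, gaussianPDF μ v x
        ≤ ∫⁻ x in S ∩ Bᶜ, ENNReal.ofReal (rexp ε) * gaussianPDF μ' v x :=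
          setLIntegral_mono (measurable_const.mul (measurable_gaussianPDF μ' v))
            (fun x hx => hpt x hx.2)
      _ = ENNReal.ofReal (rexp ε) * ∫⁻ x in S ∩ Bᶜ, gaussianPDF μ' v x := by
          rw [lintegral_const_mul _ (measurable_gaussianPDF _ _)]
      _ ≤ ENNReal.ofReal (rexp ε) * ∫⁻ x in S, gaussianPDF μ' v x := by
          gcongr
          exact Set.inter_subset_left
  have h2 : P B ≤ ENNReal.ofReal (stdNormalCDF (ψ / 2 - ε / ψ)) := by
    rcases lt_trichotomy a 0 with hneg | hzero | hpos
    · -- a < 0 : B ⊆ Iic c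
      have hane : a ≠ 0 := ne_of_lt hneg
      obtain ⟨c, hcdef⟩ : ∃ t : ℝ, t = σ ^ 2 * ε / a + (μ + μ') / 2 := ⟨_, rfl⟩
      have hac : a * c = σ ^ 2 * ε + a * (μ + μ') / 2 := by
        rw [hcdef, mul_add, mul_div_cancel₀ _ hane]; ring
      have hBsub : B ⊆ Set.Iic c := by
        intro x hx
        simp only [hB, Set.mem_setOf_eq] at hx
        simp only [Set.mem_Iic]
        nlinarith [hx, hac, hneg]
      have hval : (c - μ) / σ = -a / (2 * σ) - σ * ε / -a := by
        rw [hcdef]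
        field_simp [hane]
        rw [ha]
        ring
      have hbΔ : -a ≤ Δ := by
        have := abs_le.mp haΔ
        linarith [this.1]
      calc P B ≤ P (Set.Iic c) := measure_mono hBsub
        _ ≤ ENNReal.ofReal (stdNormalCDF ((c - μ) / σ)) := gaussian_Iic_le μ σ c hσ
        _ ≤ ENNReal.ofReal (stdNormalCDF (ψ / 2 - ε / ψ)) := by
            apply ENNReal.ofReal_le_ofReal
            apply stdNormalCDF_mono
            rw [hval]
            exact mono_aux σ Δ ε (-a) ψ hσ hΔ hε (by linarith) hbΔ hψ
    · -- a = 0 : B = ∅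
      have hBe : B = ∅ := by
        ext x
        simp only [hB, Set.mem_setOf_eq, Set.mem_empty_iff_false, iff_false, not_lt, hzero,
          zero_mul]
        positivity
      rw [hBe]
      simp
    · -- a > 0 : B ⊆ Ici c
      have hane : a ≠ 0 := ne_of_gt hpos
      obtain ⟨c, hcdef⟩ : ∃ t : ℝ, t = σ ^ 2 * ε / a + (μ + μ') / 2 := ⟨_, rfl⟩
      have hac : a * c = σ ^ 2 * ε + a * (μ + μ') / 2 := by
        rw [hcdef, mul_add, mul_div_cancel₀ _ hane]; ring
      have hBsub : B ⊆ Set.Ici c := by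
        intro x hx
        simp only [hB, Set.mem_setOf_eq] at hx
        simp only [Set.mem_Ici]
        nlinarith [hx, hac, hpos]
      have hval : (μ - c) / σ = a / (2 * σ) - σ * ε / a := by
        rw [hcdef]
        field_simp [hane]
        rw [ha]
        ring
      have haΔ' : a ≤ Δ := le_of_abs_le haΔ
      calc P B ≤ P (Set.Ici c) := measure_mono hBsub
        _ ≤ ENNReal.ofReal (stdNormalCDF ((μ - c) / σ)) := gaussian_Ici_le μ σ c hσ
        _ ≤ ENNReal.ofReal (stdNormalCDF (ψ / 2 - ε / ψ)) := by
            apply ENNReal.ofReal_le_ofReal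
            apply stdNormalCDF_mono
            rw [hval]
            exact mono_aux σ Δ ε a ψ hσ hΔ hε hpos haΔ' hψ
  calc P S ≤ P (S ∩ Bᶜ) + P B := hsplit
    _ ≤ ENNReal.ofReal (rexp ε) * Q S + ENNReal.ofReal (stdNormalCDF (ψ / 2 - ε / ψ)) :=
        add_le_add h1 h2
end

section
/- Let a ∈ ℝ and b > 0. Then ∫₀¹ Φ(a + b·Φ⁻¹(t)) dt = Φ(a/√(1 + b²)); that is, the area under the binormal ROC curve ROC(t) = Φ(a + b·Φ⁻¹(t)) equals Φ(a/√(1+b²)). -/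
open MeasureTheory ProbabilityTheory Real Set Filter

/-- `Φ⁻¹`, the standard normal quantile function (inverse of `Φ`). -/
noncomputable def stdNormalCDFInv : ℝ → ℝ := Function.invFun stdNormalCDF

noncomputable def auxPhi (x : ℝ) : ℝ := (Real.sqrt (2 * π))⁻¹ * Real.exp (-x ^ 2 / 2)

lemma auxPhi_eq : auxPhi = gaussianPDFReal 0 1 := by
  ext x
  simp [auxPhi, gaussianPDFReal]

lemma auxPhi_pos (x : ℝ) : 0 < auxPhi x := by
  have := pi_pos
  unfold auxPhi; positivity

lemma auxPhi_cont : Continuous auxPhi := by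
  unfold auxPhi; continuity

lemma auxPhi_integrable : Integrable auxPhi := by
  rw [auxPhi_eq]; exact integrable_gaussianPDFReal 0 1

lemma auxPhi_le (x : ℝ) : auxPhi x ≤ (Real.sqrt (2 * π))⁻¹ := by
  have h2 : Real.exp (-x ^ 2 / 2) ≤ 1 := by
    rw [Real.exp_le_one_iff]
    nlinarith [sq_nonneg x]
  have : (0:ℝ) ≤ (Real.sqrt (2 * π))⁻¹ := by positivity
  calc auxPhi x ≤ (Real.sqrt (2 * π))⁻¹ * 1 := by
        exact mul_le_mul_of_nonneg_left h2 this
    _ = _ := mul_one _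

lemma stdNormalCDF_eq (x : ℝ) : stdNormalCDF x = ∫ t in Iic x, auxPhi t := by
  rw [stdNormalCDF, gaussianReal_apply_eq_integral 0 one_ne_zero, auxPhi_eq]
  exact ENNReal.toReal_ofReal
    (setIntegral_nonneg measurableSet_Iic fun t _ => gaussianPDFReal_nonneg 0 1 t)

lemma stdNormalCDF_hasDeriv (x : ℝ) : HasDerivAt stdNormalCDF (auxPhi x) x := by
  have hint : ∀ y : ℝ, stdNormalCDF y = stdNormalCDF 0 + ∫ t in (0:ℝ)..y, auxPhi t := by
    intro y
    rw [stdNormalCDF_eq, stdNormalCDF_eq]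
    rw [← intervalIntegral.integral_Iic_sub_Iic (auxPhi_integrable.integrableOn)
      (auxPhi_integrable.integrableOn)]
    ring
  have : HasDerivAt (fun y => stdNormalCDF 0 + ∫ t in (0:ℝ)..y, auxPhi t) (auxPhi x) x := by
    apply HasDerivAt.const_add
    exact intervalIntegral.integral_hasDerivAt_right
      (auxPhi_integrable.intervalIntegrable)
      (auxPhi_cont.stronglyMeasurableAtFilter _ _)
      auxPhi_cont.continuousAt
  exact this.congr_of_eventuallyEq (Eventually.of_forall fun y => hint y)

lemma stdNormalCDF_cont : Continuous stdNormalCDF :=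
  continuous_iff_continuousAt.2 fun x => (stdNormalCDF_hasDeriv x).continuousAt

lemma stdNormalCDF_strictMono : StrictMono stdNormalCDF := by
  intro x y hxy
  have h : stdNormalCDF y - stdNormalCDF x = ∫ t in x..y, auxPhi t := by
    rw [stdNormalCDF_eq, stdNormalCDF_eq,
      ← intervalIntegral.integral_Iic_sub_Iic auxPhi_integrable.integrableOn
        auxPhi_integrable.integrableOn]
  have hpos : 0 < ∫ t in x..y, auxPhi t :=
    intervalIntegral.intervalIntegral_pos_of_pos
      (auxPhi_integrable.intervalIntegrable) auxPhi_pos hxy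
  linarith [h]

lemma stdNormalCDF_nonneg (x : ℝ) : 0 ≤ stdNormalCDF x := ENNReal.toReal_nonneg

lemma stdNormalCDF_le_one (x : ℝ) : stdNormalCDF x ≤ 1 := by
  rw [stdNormalCDF]
  have : (gaussianReal 0 1) (Set.Iic x) ≤ 1 := prob_le_one
  exact ENNReal.toReal_le_of_le_ofReal one_pos.le (by simpa using this)

lemma stdNormalCDF_tendsto_atBot : Tendsto stdNormalCDF atBot (nhds 0) := by
  have h1 : Tendsto (fun x : ℝ => (gaussianReal 0 1) (Set.Ici x)) atBot
      (nhds ((gaussianReal 0 1) Set.univ)) := tendsto_measure_Ici_atBot _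
  rw [measure_univ] at h1
  have h2 : Tendsto (fun x : ℝ => ((gaussianReal 0 1) (Set.Ici (x + 1))).toReal)
      atBot (nhds 1) := by
    have := (ENNReal.tendsto_toReal (by simp)).comp
      (h1.comp (tendsto_atBot_add_const_right atBot (1:ℝ) tendsto_id))
    simpa [Function.comp_def] using this
  have hle : ∀ x : ℝ, stdNormalCDF x ≤ 1 - ((gaussianReal 0 1) (Set.Ici (x + 1))).toReal := by
    intro x
    have hdisj : Disjoint (Set.Iic x) (Set.Ici (x + 1)) := by
      rw [Set.disjoint_left]
      intro t ht1 ht2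
      simp only [Set.mem_Iic, Set.mem_Ici] at *
      linarith
    have hsum : (gaussianReal 0 1) (Set.Iic x) + (gaussianReal 0 1) (Set.Ici (x+1)) ≤ 1 := by
      rw [← measure_union hdisj measurableSet_Ici]
      exact prob_le_one
    have hfin1 : (gaussianReal 0 1) (Set.Iic x) ≠ ⊤ := measure_ne_top _ _
    have hfin2 : (gaussianReal 0 1) (Set.Ici (x+1)) ≠ ⊤ := measure_ne_top _ _
    have h3 : stdNormalCDF x + ((gaussianReal 0 1) (Set.Ici (x+1))).toReal ≤ 1 := by
      rw [stdNormalCDF, ← ENNReal.toReal_add hfin1 hfin2]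
      exact le_trans (ENNReal.toReal_mono (by simp) hsum) (by simp)
    linarith
  apply tendsto_of_tendsto_of_tendsto_of_le_of_le (g := fun _ : ℝ => (0:ℝ))
    (h := fun x : ℝ => 1 - ((gaussianReal 0 1) (Set.Ici (x + 1))).toReal)
    tendsto_const_nhds (by simpa using (tendsto_const_nhds (x := (1:ℝ))).sub h2)
    (fun x => stdNormalCDF_nonneg x) hle

lemma stdNormalCDF_tendsto_atTop : Tendsto stdNormalCDF atTop (nhds 1) := by
  have h : Tendsto (fun x => (gaussianReal 0 1) (Set.Iic x)) atTop
      (nhds ((gaussianReal 0 1) Set.univ)) := tendsto_measure_Iic_atTop _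
  rw [measure_univ] at h
  have := (ENNReal.tendsto_toReal (by simp)).comp h
  rw [show stdNormalCDF = fun x => ((gaussianReal 0 1) (Set.Iic x)).toReal from rfl]
  simpa [Function.comp_def] using this

lemma stdNormalCDF_range : Set.range stdNormalCDF = Ioo 0 1 := by
  apply Set.eq_of_subset_of_subset
  · rintro _ ⟨x, rfl⟩
    constructor
    · have h := stdNormalCDF_strictMono (show x - 1 < x by linarith)
      linarith [stdNormalCDF_nonneg (x - 1)]
    · have h := stdNormalCDF_strictMono (show x < x + 1 by linarith)
      linarith [stdNormalCDF_le_one (x + 1)]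
  · rintro t ⟨ht0, ht1⟩
    obtain ⟨x, hx⟩ : ∃ x, stdNormalCDF x < t :=
      (stdNormalCDF_tendsto_atBot.eventually_lt_const ht0).exists
    obtain ⟨y, hy⟩ : ∃ y, t < stdNormalCDF y :=
      (stdNormalCDF_tendsto_atTop.eventually_const_lt ht1).exists
    have hxy : x ≤ y := by
      by_contra h
      exact absurd (stdNormalCDF_strictMono (not_le.1 h)) (by linarith)
    obtain ⟨z, _, hz⟩ := intermediate_value_Icc hxy stdNormalCDF_cont.continuousOn
      (Set.mem_Icc.2 ⟨hx.le, hy.le⟩)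
    exact ⟨z, hz⟩

lemma inv_comp (x : ℝ) : stdNormalCDFInv (stdNormalCDF x) = x :=
  Function.leftInverse_invFun stdNormalCDF_strictMono.injective x

lemma change_of_var (f : ℝ → ℝ) :
    ∫ t in Ioo (0:ℝ) 1, f (stdNormalCDFInv t) = ∫ x, auxPhi x * f x := by
  have h := integral_image_eq_integral_abs_deriv_smul (s := Set.univ) MeasurableSet.univ
    (fun x _ => (stdNormalCDF_hasDeriv x).hasDerivWithinAt)
    (stdNormalCDF_strictMono.injective.injOn) (fun t => f (stdNormalCDFInv t))
  rw [Set.image_univ, stdNormalCDF_range] at h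
  rw [h, Measure.restrict_univ]
  congr 1
  ext x
  rw [inv_comp, abs_of_pos (auxPhi_pos x), smul_eq_mul]

lemma gauss_conv (a b : ℝ) (hb : 0 < b) :
    ∫ x : ℝ, auxPhi x * auxPhi (a + b * x)
      = auxPhi (a / Real.sqrt (1 + b^2)) / Real.sqrt (1 + b^2) := by
  have h1b : (0:ℝ) < 1 + b^2 := by positivity
  set s := Real.sqrt (1 + b^2) with hs_def
  have hs2 : s^2 = 1 + b^2 := Real.sq_sqrt h1b.le
  have hs : 0 < s := Real.sqrt_pos.2 h1b
  have hpi : (0:ℝ) < π := pi_pos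
  have hsq2pi : Real.sqrt (2*π) * Real.sqrt (2*π) = 2*π := Real.mul_self_sqrt (by positivity)
  set c := a * b / (1 + b^2) with hc
  have hint : ∀ x : ℝ, auxPhi x * auxPhi (a + b * x)
      = (2*π)⁻¹ * Real.exp (-a^2/(2*(1+b^2))) * Real.exp (-((1+b^2)/2) * (x + c)^2) := by
    intro x
    rw [auxPhi, auxPhi]
    rw [show ((Real.sqrt (2*π))⁻¹ * Real.exp (-x ^ 2 / 2)) *
        ((Real.sqrt (2*π))⁻¹ * Real.exp (-(a + b*x) ^ 2 / 2))
        = (Real.sqrt (2*π) * Real.sqrt (2*π))⁻¹ *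
          (Real.exp (-x ^ 2 / 2) * Real.exp (-(a + b*x) ^ 2 / 2)) by ring]
    rw [hsq2pi, ← Real.exp_add, mul_assoc, ← Real.exp_add]
    congr 2
    rw [hc]
    field_simp
    ring
  calc ∫ x : ℝ, auxPhi x * auxPhi (a + b * x)
      = ∫ x : ℝ, (2*π)⁻¹ * Real.exp (-a^2/(2*(1+b^2))) *
          Real.exp (-((1+b^2)/2) * (x + c)^2) := by
        exact integral_congr_ae (Eventually.of_forall hint)
    _ = (2*π)⁻¹ * Real.exp (-a^2/(2*(1+b^2))) *
          ∫ x : ℝ, Real.exp (-((1+b^2)/2) * (x + c)^2) := integral_const_mul _ _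
    _ = (2*π)⁻¹ * Real.exp (-a^2/(2*(1+b^2))) *
          ∫ x : ℝ, Real.exp (-((1+b^2)/2) * x^2) := by
        congr 1
        exact integral_add_right_eq_self (fun y => Real.exp (-((1+b^2)/2) * y^2)) c
    _ = (2*π)⁻¹ * Real.exp (-a^2/(2*(1+b^2))) * Real.sqrt (π / ((1+b^2)/2)) := by
        rw [integral_gaussian]
    _ = auxPhi (a / s) / s := by
        rw [auxPhi]
        rw [show π / ((1+b^2)/2) = 2*π/(1+b^2) by field_simp]
        rw [Real.sqrt_div (by positivity : (0:ℝ) ≤ 2*π), ← hs_def]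
        rw [show -(a/s)^2/2 = -a^2/(2*(1+b^2)) by rw [div_pow, hs2, neg_div, neg_div, div_div, mul_comm]]
        have e1 : Real.sqrt (2*π) ^ 2 = 2*π := Real.sq_sqrt (by positivity)
        have e2 : Real.sqrt 2 ^ 2 = (2:ℝ) := Real.sq_sqrt (by norm_num)
        have e3 : Real.sqrt π ^ 2 = π := Real.sq_sqrt hpi.le
        have h22 : Real.sqrt 2 * Real.sqrt π * (Real.sqrt 2 * Real.sqrt π) = 2 * π := by
          have a2 := Real.mul_self_sqrt (by norm_num : (0:ℝ) ≤ 2)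
          have a3 := Real.mul_self_sqrt hpi.le
          nlinarith [a2, a3]
        field_simp
        linear_combination e1

lemma F_integrand_integrable (a b : ℝ) :
    Integrable (fun x => auxPhi x * stdNormalCDF (a + b * x)) := by
  apply auxPhi_integrable.mono'
  · exact (auxPhi_cont.mul (stdNormalCDF_cont.comp (by continuity))).aestronglyMeasurable
  · filter_upwards with x
    rw [Real.norm_eq_abs, abs_mul, abs_of_pos (auxPhi_pos x),
      abs_of_nonneg (stdNormalCDF_nonneg _)]
    calc auxPhi x * stdNormalCDF (a + b * x) ≤ auxPhi x * 1 :=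
          mul_le_mul_of_nonneg_left (stdNormalCDF_le_one _) (auxPhi_pos x).le
      _ = auxPhi x := mul_one _

lemma F_hasDeriv (b : ℝ) (hb : 0 < b) (a₀ : ℝ) :
    HasDerivAt (fun a => ∫ x : ℝ, auxPhi x * stdNormalCDF (a + b * x))
      (auxPhi (a₀ / Real.sqrt (1 + b^2)) / Real.sqrt (1 + b^2)) a₀ := by
  have key := hasDerivAt_integral_of_dominated_loc_of_deriv_le
    (F := fun a x => auxPhi x * stdNormalCDF (a + b * x))
    (F' := fun a x => auxPhi x * auxPhi (a + b * x))
    (x₀ := a₀) (bound := fun x => auxPhi x * (Real.sqrt (2 * π))⁻¹)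
    (μ := volume) (s := Metric.ball a₀ 1) (Metric.ball_mem_nhds a₀ one_pos)
    (Eventually.of_forall fun a =>
      (auxPhi_cont.mul (stdNormalCDF_cont.comp (by continuity))).aestronglyMeasurable)
    (F_integrand_integrable a₀ b)
    ((auxPhi_cont.mul (auxPhi_cont.comp (by continuity))).aestronglyMeasurable)
    (by
      filter_upwards with x a _
      rw [Real.norm_eq_abs, abs_mul, abs_of_pos (auxPhi_pos x), abs_of_pos (auxPhi_pos _)]
      exact mul_le_mul_of_nonneg_left (auxPhi_le _) (auxPhi_pos x).le)
    (auxPhi_integrable.mul_const _)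
    (by
      filter_upwards with x a _
      have h1 : HasDerivAt (fun a : ℝ => a + b * x) 1 a := (hasDerivAt_id a).add_const _
      have h2 := (stdNormalCDF_hasDeriv (a + b * x)).comp a h1
      simpa using h2.const_mul (auxPhi x))
  have := key.2
  rwa [gauss_conv a₀ b hb] at this

lemma F_tendsto_atBot (b : ℝ) (hb : 0 < b) :
    Tendsto (fun a => ∫ x : ℝ, auxPhi x * stdNormalCDF (a + b * x)) atBot (nhds 0) := by
  have h := MeasureTheory.tendsto_integral_filter_of_dominated_convergence
    (F := fun a x => auxPhi x * stdNormalCDF (a + b * x))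
    (f := fun _ : ℝ => (0:ℝ)) (bound := auxPhi) (μ := volume) (l := atBot)
    (Eventually.of_forall fun a =>
      (auxPhi_cont.mul (stdNormalCDF_cont.comp (by continuity))).aestronglyMeasurable)
    (Eventually.of_forall fun a => by
      filter_upwards with x
      rw [Real.norm_eq_abs, abs_mul, abs_of_pos (auxPhi_pos x),
        abs_of_nonneg (stdNormalCDF_nonneg _)]
      calc auxPhi x * stdNormalCDF (a + b * x) ≤ auxPhi x * 1 :=
            mul_le_mul_of_nonneg_left (stdNormalCDF_le_one _) (auxPhi_pos x).le
        _ = auxPhi x := mul_one _)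
    auxPhi_integrable
    (by
      filter_upwards with x
      have h1 : Tendsto (fun a : ℝ => a + b * x) atBot atBot :=
        tendsto_atBot_add_const_right atBot (b * x) tendsto_id
      have h2 := (stdNormalCDF_tendsto_atBot.comp h1).const_mul (auxPhi x)
      simpa using h2)
  simpa using h

lemma main_integral (a b : ℝ) (hb : 0 < b) :
    ∫ x : ℝ, auxPhi x * stdNormalCDF (a + b * x)
      = stdNormalCDF (a / Real.sqrt (1 + b^2)) := by
  have h1b : (0:ℝ) < 1 + b^2 := by positivity
  set s := Real.sqrt (1 + b^2) with hs_def
  have hs : 0 < s := Real.sqrt_pos.2 h1b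
  set F : ℝ → ℝ := fun a => ∫ x : ℝ, auxPhi x * stdNormalCDF (a + b * x) with hF
  set G : ℝ → ℝ := fun a => stdNormalCDF (a / s) with hG
  have hGderiv : ∀ a₀, HasDerivAt G (auxPhi (a₀ / s) / s) a₀ := by
    intro a₀
    have h1 : HasDerivAt (fun a : ℝ => a / s) (1 / s) a₀ := (hasDerivAt_id a₀).div_const s
    have h2 := (stdNormalCDF_hasDeriv (a₀ / s)).comp a₀ h1
    simpa [div_eq_mul_inv, mul_comm, Function.comp_def, hG] using h2
  have hH : ∀ a₀, HasDerivAt (fun a => F a - G a) 0 a₀ := by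
    intro a₀
    have := (F_hasDeriv b hb a₀).sub (hGderiv a₀)
    rw [← hs_def, sub_self] at this
    exact this
  have hconst : ∀ y, F y - G y = F a - G a := by
    intro y
    exact is_const_of_deriv_eq_zero (fun x => (hH x).differentiableAt)
      (fun x => (hH x).deriv) y a
  have hGbot : Tendsto G atBot (nhds 0) := by
    have h1 : Tendsto (fun a : ℝ => a / s) atBot atBot :=
      tendsto_id.atBot_div_const hs
    exact stdNormalCDF_tendsto_atBot.comp h1
  have hHbot : Tendsto (fun y => F y - G y) atBot (nhds 0) := by
    have := (F_tendsto_atBot b hb).sub hGbot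
    simpa using this
  have hzero : F a - G a = 0 := by
    have h2 : Tendsto (fun _ : ℝ => F a - G a) atBot (nhds (F a - G a)) := tendsto_const_nhds
    have h3 : Tendsto (fun y => F y - G y) atBot (nhds (F a - G a)) := by
      apply h2.congr
      intro y
      exact (hconst y).symm
    exact tendsto_nhds_unique h3 hHbot
  have : F a = G a := by linarith
  simpa [hF, hG, hs_def] using this

/-- the area under the binormal ROC curve
`ROC(t) = Φ(a + b·Φ⁻¹(t))` on `(0,1)` equals `Φ(a/√(1 + b²))`. -/
theorem binormal_auc (a b : ℝ) (hb : 0 < b) :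
    ∫ t in Set.Ioo (0 : ℝ) 1, stdNormalCDF (a + b * stdNormalCDFInv t) =
      stdNormalCDF (a / Real.sqrt (1 + b ^ 2)) := by
  calc ∫ t in Set.Ioo (0:ℝ) 1, stdNormalCDF (a + b * stdNormalCDFInv t)
      = ∫ x : ℝ, auxPhi x * stdNormalCDF (a + b * x) :=
        change_of_var (fun u => stdNormalCDF (a + b * u))
    _ = stdNormalCDF (a / Real.sqrt (1 + b ^ 2)) := main_integral a b hb
end

section
/- Let σ > 0, Δ > 0, α > 1, δ ∈ (0,1), and let μ, μ' ∈ ℝ with |μ − μ'| ≤ Δ. Set ψ = Δ/σ and ε = (α/2)·ψ² + log(1/δ)/(α−1). Then for every measurable set S ⊆ ℝ, the Gaussian measures P = N(μ, σ²) and Q = N(μ', σ²) satisfy P(S) ≤ e^ε · Q(S) + δ; i.e., the Gaussian mechanism with sensitivity index ψ, which satisfies (α, (α/2)ψ²)-Rényi DP, satisfies ((α/2)ψ² + log(1/δ)/(α−1), δ)-differential privacy. -/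
open MeasureTheory ProbabilityTheory Real

set_option maxHeartbeats 1000000 in
lemma gaussian_rdp_alg_aux (a p L t ε : ℝ) (ha : 0 < a) (hp : 0 < p) (hL : 0 < L)
    (ht : t = a / 2 + L / (a * p)) (hε : ε = (a + 1) / 2 * p + L / a) :
    2 * L ≤ 2 * t * ε - (t + t ^ 2) * p := by
  rw [← sub_nonneg, ht, hε]
  have h : 2 * (a / 2 + L / (a * p)) * ((a + 1) / 2 * p + L / a)
      - ((a / 2 + L / (a * p)) + (a / 2 + L / (a * p)) ^ 2) * p - 2 * L
      = (a ^ 2 * p - 2 * L) ^ 2 / (4 * a ^ 2 * p) := by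
    field_simp
    ring
  rw [h]
  positivity


set_option maxHeartbeats 1000000 in
/-- standard RDP-to-DP conversion for the Gaussian mechanism. For
`σ > 0`, `Δ > 0`, `α > 1`, `δ ∈ (0,1)`, `|μ − μ'| ≤ Δ`, `ψ = Δ/σ` and
`ε = (α/2)ψ² + log(1/δ)/(α−1)`, the measures `P = N(μ, σ²)`, `Q = N(μ', σ²)` satisfy
`P(S) ≤ e^ε·Q(S) + δ` for every measurable `S`. -/
theorem gaussian_mechanism_rdp_to_dp_standard (σ Δ α δ μ μ' ψ ε : ℝ)
    (hσ : 0 < σ) (hΔ : 0 < Δ) (hα : 1 < α) (hδ : δ ∈ Set.Ioo (0 : ℝ) 1)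
    (hadj : |μ - μ'| ≤ Δ) (hψ : ψ = Δ / σ)
    (hε : ε = α / 2 * ψ ^ 2 + Real.log (1 / δ) / (α - 1)) :
    ∀ S : Set ℝ, MeasurableSet S →
      (gaussianReal μ ⟨σ ^ 2, sq_nonneg σ⟩) S ≤
        ENNReal.ofReal (Real.exp ε) * (gaussianReal μ' ⟨σ ^ 2, sq_nonneg σ⟩) S +
          ENNReal.ofReal δ := by
  obtain ⟨hδ0, hδ1⟩ := hδ
  set v : NNReal := ⟨σ ^ 2, sq_nonneg σ⟩ with hvdef
  have hvR : (v : ℝ) = σ ^ 2 := rfl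
  have hσ2 : (0:ℝ) < σ ^ 2 := by positivity
  have hv0 : v ≠ 0 := by
    intro h
    have h2 : (v : ℝ) = 0 := by rw [h]; rfl
    rw [hvR] at h2
    exact absurd h2 hσ2.ne'
  set L := Real.log (1 / δ) with hLdef
  have hL : 0 < L := Real.log_pos (by rw [lt_div_iff₀ hδ0]; linarith)
  set a := α - 1 with hadef
  have ha : 0 < a := by simp only [hadef]; linarith
  have hψ0 : 0 < ψ := by rw [hψ]; positivity
  set p := ψ ^ 2 with hpdef
  have hp : 0 < p := by positivity
  set c := μ - μ' with hcdef
  have hc2 : c ^ 2 ≤ σ ^ 2 * p := by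
    have h1 : c ^ 2 ≤ Δ ^ 2 := by
      rw [← sq_abs]
      exact pow_le_pow_left₀ (abs_nonneg _) hadj 2
    have h2 : Δ = ψ * σ := by rw [hψ]; field_simp
    calc c ^ 2 ≤ Δ ^ 2 := h1
      _ = σ ^ 2 * p := by rw [h2, hpdef]; ring
  set t := a / 2 + L / (a * p) with htdef
  have ht : 0 < t := by positivity
  set m := μ + t * c with hmdef
  have hε' : ε = (a + 1) / 2 * p + L / a := by rw [hε, hadef]; ring_nf
  -- the key algebraic inequality
  have halg : 2 * σ ^ 2 * L ≤ 2 * t * σ ^ 2 * ε - (t + t ^ 2) * c ^ 2 := by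
    have h1 : 2 * L ≤ 2 * t * ε - (t + t ^ 2) * p :=
      gaussian_rdp_alg_aux a p L t ε ha hp hL htdef hε'
    have h2 : (t + t ^ 2) * c ^ 2 ≤ (t + t ^ 2) * (σ ^ 2 * p) :=
      mul_le_mul_of_nonneg_left hc2 (by positivity)
    have h3 : σ ^ 2 * (2 * L) ≤ σ ^ 2 * (2 * t * ε - (t + t ^ 2) * p) :=
      mul_le_mul_of_nonneg_left h1 hσ2.le
    nlinarith [h2, h3]
  -- pointwise density bound
  have key : ∀ x : ℝ, gaussianPDFReal μ v x ≤
      Real.exp ε * gaussianPDFReal μ' v x + δ * gaussianPDFReal m v x := by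
    intro x
    have hKpos : 0 < (Real.sqrt (2 * π * (v : ℝ)))⁻¹ := by
      rw [hvR]
      have : 0 < Real.sqrt (2 * π * σ ^ 2) := Real.sqrt_pos.mpr (by positivity)
      positivity
    simp only [gaussianPDFReal]
    rcases le_or_gt (c * (x - μ)) (σ ^ 2 * ε - c ^ 2 / 2) with hcase | hcase
    · -- pdf_μ ≤ e^ε pdf_μ'
      have hexp : rexp (-(x - μ) ^ 2 / (2 * (v:ℝ))) ≤
          Real.exp ε * rexp (-(x - μ') ^ 2 / (2 * (v:ℝ))) := by
        rw [← Real.exp_add, Real.exp_le_exp, hvR, ← sub_nonneg]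
        have h : ε + -(x - μ') ^ 2 / (2 * σ ^ 2) - (-(x - μ) ^ 2 / (2 * σ ^ 2))
            = (2 * σ ^ 2 * ε - (x - μ') ^ 2 + (x - μ) ^ 2) / (2 * σ ^ 2) := by
          field_simp
          ring
        rw [h]
        apply div_nonneg _ (by positivity)
        have hμ' : μ' = μ - c := by rw [hcdef]; ring
        rw [hμ']
        have heq : 2 * σ ^ 2 * ε - (x - (μ - c)) ^ 2 + (x - μ) ^ 2
            = 2 * (σ ^ 2 * ε - c ^ 2 / 2 - c * (x - μ)) := by ring
        rw [heq]
        linarith [hcase]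
      have h2 : 0 ≤ δ * ((Real.sqrt (2 * π * (v:ℝ)))⁻¹ * rexp (-(x - m) ^ 2 / (2 * (v:ℝ)))) := by
        apply mul_nonneg hδ0.le
        positivity
      calc (Real.sqrt (2 * π * (v:ℝ)))⁻¹ * rexp (-(x - μ) ^ 2 / (2 * (v:ℝ)))
          ≤ (Real.sqrt (2 * π * (v:ℝ)))⁻¹ * (Real.exp ε * rexp (-(x - μ') ^ 2 / (2 * (v:ℝ)))) :=
            mul_le_mul_of_nonneg_left hexp hKpos.le
        _ = Real.exp ε * ((Real.sqrt (2 * π * (v:ℝ)))⁻¹ * rexp (-(x - μ') ^ 2 / (2 * (v:ℝ)))) := by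
            ring
        _ ≤ _ := le_add_of_nonneg_right h2
    · -- pdf_μ ≤ δ pdf_m
      have hexp : rexp (-(x - μ) ^ 2 / (2 * (v:ℝ))) ≤ δ * rexp (-(x - m) ^ 2 / (2 * (v:ℝ))) := by
        have hδexp : δ = Real.exp (-L) := by
          rw [hLdef, Real.log_div one_ne_zero hδ0.ne', Real.log_one]
          simp [Real.exp_log hδ0]
        rw [hδexp, ← Real.exp_add, Real.exp_le_exp, hvR, ← sub_nonneg]
        have h : -L + -(x - m) ^ 2 / (2 * σ ^ 2) - (-(x - μ) ^ 2 / (2 * σ ^ 2))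
            = (-2 * σ ^ 2 * L - (x - m) ^ 2 + (x - μ) ^ 2) / (2 * σ ^ 2) := by
          field_simp
          ring
        rw [h]
        apply div_nonneg _ (by positivity)
        have hkey : 2 * σ ^ 2 * L ≤ 2 * t * (c * (x - μ)) - t ^ 2 * c ^ 2 := by
          have h1 : 2 * t * (σ ^ 2 * ε - c ^ 2 / 2) ≤ 2 * t * (c * (x - μ)) :=
            mul_le_mul_of_nonneg_left hcase.le (by positivity)
          calc 2 * σ ^ 2 * L ≤ 2 * t * σ ^ 2 * ε - (t + t ^ 2) * c ^ 2 := halg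
            _ = 2 * t * (σ ^ 2 * ε - c ^ 2 / 2) - t ^ 2 * c ^ 2 := by ring
            _ ≤ 2 * t * (c * (x - μ)) - t ^ 2 * c ^ 2 := by linarith [h1]
        rw [hmdef]
        have heq : -2 * σ ^ 2 * L - (x - (μ + t * c)) ^ 2 + (x - μ) ^ 2
            = (2 * t * (c * (x - μ)) - t ^ 2 * c ^ 2) - 2 * σ ^ 2 * L := by ring
        rw [heq]
        linarith [hkey]
      have h2 : 0 ≤ Real.exp ε * ((Real.sqrt (2 * π * (v:ℝ)))⁻¹ *
          rexp (-(x - μ') ^ 2 / (2 * (v:ℝ)))) := by positivity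
      calc (Real.sqrt (2 * π * (v:ℝ)))⁻¹ * rexp (-(x - μ) ^ 2 / (2 * (v:ℝ)))
          ≤ (Real.sqrt (2 * π * (v:ℝ)))⁻¹ * (δ * rexp (-(x - m) ^ 2 / (2 * (v:ℝ)))) :=
            mul_le_mul_of_nonneg_left hexp hKpos.le
        _ = δ * ((Real.sqrt (2 * π * (v:ℝ)))⁻¹ * rexp (-(x - m) ^ 2 / (2 * (v:ℝ)))) := by ring
        _ ≤ _ := le_add_of_nonneg_left h2
  -- measure-theoretic part
  intro S hS
  rw [gaussianReal_apply μ hv0 S, gaussianReal_apply μ' hv0 S]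
  have hmono : ∫⁻ x in S, gaussianPDF μ v x ≤
      ∫⁻ x in S, (ENNReal.ofReal (Real.exp ε) * gaussianPDF μ' v x
        + ENNReal.ofReal δ * gaussianPDF m v x) := by
    apply lintegral_mono
    intro x
    calc gaussianPDF μ v x = ENNReal.ofReal (gaussianPDFReal μ v x) := rfl
      _ ≤ ENNReal.ofReal (Real.exp ε * gaussianPDFReal μ' v x + δ * gaussianPDFReal m v x) :=
          ENNReal.ofReal_le_ofReal (key x)
      _ = ENNReal.ofReal (Real.exp ε) * gaussianPDF μ' v x
          + ENNReal.ofReal δ * gaussianPDF m v x := by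
          rw [ENNReal.ofReal_add (mul_nonneg (Real.exp_nonneg _) (gaussianPDFReal_nonneg _ _ _))
              (mul_nonneg hδ0.le (gaussianPDFReal_nonneg _ _ _)),
            ENNReal.ofReal_mul (Real.exp_nonneg _), ENNReal.ofReal_mul hδ0.le]
          rfl
  refine hmono.trans ?_
  rw [lintegral_add_left (by exact (measurable_gaussianPDF μ' v).const_mul _),
    lintegral_const_mul _ (measurable_gaussianPDF μ' v),
    lintegral_const_mul _ (measurable_gaussianPDF m v)]
  gcongr
  calc ENNReal.ofReal δ * ∫⁻ x in S, gaussianPDF m v x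
      ≤ ENNReal.ofReal δ * 1 := by
        gcongr
        calc ∫⁻ x in S, gaussianPDF m v x ≤ ∫⁻ x, gaussianPDF m v x :=
              setLIntegral_le_lintegral _ _
          _ = 1 := lintegral_gaussianPDF_eq_one m hv0
    _ = ENNReal.ofReal δ := mul_one _
end

section
/- Let σ > 0, Δ > 0, α > 1, δ ∈ (0,1), and let μ, μ' ∈ ℝ with |μ − μ'| ≤ Δ. Set ψ = Δ/σ and ε = (α/2)·ψ² + log((α−1)/α) − (log δ + log α)/(α−1). Then for every measurable set S ⊆ ℝ, the Gaussian measures P = N(μ, σ²) and Q = N(μ', σ²) satisfy P(S) ≤ e^ε · Q(S) + δ; i.e., the Gaussian mechanism with sensitivity index ψ satisfies ((α/2)ψ² + log((α−1)/α) − (log δ + log α)/(α−1), δ)-differential privacy. -/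
open MeasureTheory ProbabilityTheory Real

/-- Young-type inequality: for `α > 1`, `u ≥ 0`, `u ≤ 1 + (α-1)^(α-1)/α^α * u^α`. -/
lemma aux_young {α : ℝ} (hα : 1 < α) {u : ℝ} (hu : 0 ≤ u) :
    u ≤ 1 + (α - 1) ^ (α - 1) / α ^ α * u ^ α := by
  have hα0 : (0:ℝ) < α := by linarith
  have hα1 : (0:ℝ) < α - 1 := by linarith
  set u₀ : ℝ := α / (α - 1) with hu₀def
  have hu₀ : 0 < u₀ := div_pos hα0 hα1
  set s : ℝ := u / u₀ - 1 with hsdef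
  have hs : -1 ≤ s := by
    have : 0 ≤ u / u₀ := div_nonneg hu hu₀.le
    simp only [hsdef]; linarith
  have bern : 1 + α * s ≤ (1 + s) ^ α := one_add_mul_self_le_rpow_one_add hs hα.le
  have hueq : u = u₀ * (1 + s) := by
    rw [hsdef]
    have hcanc : u₀ * (u / u₀) = u := mul_div_cancel₀ u hu₀.ne'
    linear_combination -hcanc
  have h1s : 0 ≤ 1 + s := by linarith
  have hupow : u ^ α = u₀ ^ α * (1 + s) ^ α := by
    rw [hueq, Real.mul_rpow hu₀.le h1s]
  set K : ℝ := (α - 1) ^ (α - 1) / α ^ α with hKdef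
  have hK : 0 < K := div_pos (Real.rpow_pos_of_pos hα1 _) (Real.rpow_pos_of_pos hα0 _)
  have hKu₀ : K * u₀ ^ α = 1 / (α - 1) := by
    rw [hKdef, hu₀def, Real.div_rpow hα0.le hα1.le]
    rw [div_mul_div_comm]
    rw [mul_comm ((α - 1) ^ (α - 1)) (α ^ α)]
    rw [mul_div_mul_left _ _ (Real.rpow_pos_of_pos hα0 α).ne']
    rw [← Real.rpow_sub hα1, show α - 1 - α = -1 by ring, Real.rpow_neg_one, one_div]
  have key : u - 1 ≤ K * u ^ α := by
    have h2 : K * u₀ ^ α * (1 + α * s) ≤ K * u₀ ^ α * (1 + s) ^ α := by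
      apply mul_le_mul_of_nonneg_left bern
      positivity
    have h3 : K * u₀ ^ α * (1 + α * s) = u - 1 := by
      rw [hKu₀, hsdef, hu₀def]
      field_simp
      ring
    rw [hupow, ← mul_assoc]
    linarith [h2, h3.symm.le]
  linarith

/-- Pointwise bound: `a ≤ t b + K t^(1-α) a^α b^(1-α)`. -/
lemma aux_point {α t : ℝ} (hα : 1 < α) (ht : 0 < t) {a b : ℝ} (ha : 0 ≤ a) (hb : 0 < b) :
    a ≤ t * b + (α - 1) ^ (α - 1) / α ^ α * t ^ (1 - α) * (a ^ α * b ^ (1 - α)) := by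
  have htb : 0 < t * b := mul_pos ht hb
  have h := aux_young hα (div_nonneg ha htb.le) (α := α)
  have h2 : a ≤ t * b + (α - 1) ^ (α - 1) / α ^ α * ((t * b) * (a / (t * b)) ^ α) := by
    have := mul_le_mul_of_nonneg_left h htb.le
    rw [mul_div_cancel₀ _ htb.ne'] at this
    calc a ≤ t * b * (1 + (α - 1) ^ (α - 1) / α ^ α * (a / (t * b)) ^ α) := this
      _ = t * b + (α - 1) ^ (α - 1) / α ^ α * ((t * b) * (a / (t * b)) ^ α) := by ring
  have h3 : (t * b) * (a / (t * b)) ^ α = t ^ (1 - α) * (a ^ α * b ^ (1 - α)) := by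
    have e1 : (t * b) * (a / (t * b)) ^ α = a ^ α * (t * b) ^ (1 - α) := by
      rw [Real.div_rpow ha htb.le, show (1:ℝ) - α = 1 + -α by ring, Real.rpow_add htb,
        Real.rpow_one, Real.rpow_neg htb.le]
      ring
    rw [e1, Real.mul_rpow ht.le hb.le]
    ring
  rw [h3] at h2
  linarith [h2]

/-- Gaussian pdf power identity. -/
lemma aux_pdf_pow {σ : ℝ} (hσ : 0 < σ) (μ μ' α x : ℝ) :
    (gaussianPDFReal μ ⟨σ ^ 2, sq_nonneg σ⟩ x) ^ α *
      (gaussianPDFReal μ' ⟨σ ^ 2, sq_nonneg σ⟩ x) ^ (1 - α)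
      = Real.exp (α * (α - 1) * (μ - μ') ^ 2 / (2 * σ ^ 2)) *
        gaussianPDFReal (α * μ + (1 - α) * μ') ⟨σ ^ 2, sq_nonneg σ⟩ x := by
  simp only [gaussianPDFReal, NNReal.coe_mk]
  change ((Real.sqrt (2 * Real.pi * σ ^ 2))⁻¹ * Real.exp (-(x - μ) ^ 2 / (2 * σ ^ 2))) ^ α *
      ((Real.sqrt (2 * Real.pi * σ ^ 2))⁻¹ * Real.exp (-(x - μ') ^ 2 / (2 * σ ^ 2))) ^ (1 - α) =
    Real.exp (α * (α - 1) * (μ - μ') ^ 2 / (2 * σ ^ 2)) *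
      ((Real.sqrt (2 * Real.pi * σ ^ 2))⁻¹ *
        Real.exp (-(x - (α * μ + (1 - α) * μ')) ^ 2 / (2 * σ ^ 2)))
  set c : ℝ := (Real.sqrt (2 * Real.pi * σ ^ 2))⁻¹ with hcdef
  have hc : 0 < c := by
    rw [hcdef]
    positivity
  rw [Real.mul_rpow hc.le (Real.exp_nonneg _), Real.mul_rpow hc.le (Real.exp_nonneg _)]
  rw [← Real.exp_mul, ← Real.exp_mul]
  have hcc : c ^ α * c ^ (1 - α) = c := by
    rw [← Real.rpow_add hc, show α + (1 - α) = 1 by ring, Real.rpow_one]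
  calc c ^ α * Real.exp (-(x - μ) ^ 2 / (2 * σ ^ 2) * α) *
        (c ^ (1 - α) * Real.exp (-(x - μ') ^ 2 / (2 * σ ^ 2) * (1 - α)))
      = (c ^ α * c ^ (1 - α)) * Real.exp (-(x - μ) ^ 2 / (2 * σ ^ 2) * α +
          -(x - μ') ^ 2 / (2 * σ ^ 2) * (1 - α)) := by
        rw [Real.exp_add]; ring
    _ = c * Real.exp (α * (α - 1) * (μ - μ') ^ 2 / (2 * σ ^ 2) +
          -(x - (α * μ + (1 - α) * μ')) ^ 2 / (2 * σ ^ 2)) := by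
        rw [hcc]
        congr 1
        field_simp
        ring
    _ = Real.exp (α * (α - 1) * (μ - μ') ^ 2 / (2 * σ ^ 2)) *
        (c * Real.exp (-(x - (α * μ + (1 - α) * μ')) ^ 2 / (2 * σ ^ 2))) := by
        rw [Real.exp_add]; ring

/-- The key constant bound. -/
lemma aux_const {σ Δ α δ μ μ' ψ ε : ℝ} (hσ : 0 < σ) (hΔ : 0 < Δ) (hα : 1 < α)
    (hδ0 : 0 < δ) (hadj : |μ - μ'| ≤ Δ) (hψ : ψ = Δ / σ)
    (hε : ε = α / 2 * ψ ^ 2 + Real.log ((α - 1) / α) -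
      (Real.log δ + Real.log α) / (α - 1)) :
    (α - 1) ^ (α - 1) / α ^ α * Real.exp ε ^ (1 - α) *
      Real.exp (α * (α - 1) * (μ - μ') ^ 2 / (2 * σ ^ 2)) ≤ δ := by
  have hα0 : (0:ℝ) < α := by linarith
  have hα1 : (0:ℝ) < α - 1 := by linarith
  have hfrac : (0:ℝ) < (α - 1) / α := div_pos hα1 hα0
  have hσ2 : (0:ℝ) < σ ^ 2 := pow_pos hσ 2
  have e0 : Real.exp ε ^ (1 - α) = Real.exp (ε * (1 - α)) := (Real.exp_mul _ _).symm
  have e1 : ε * (1 - α) = α / 2 * ψ ^ 2 * (1 - α) + (Real.log ((α - 1) / α) * (1 - α)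
      + (Real.log δ + Real.log α)) := by
    rw [hε]; field_simp; ring
  have e2 : Real.exp (Real.log ((α - 1) / α) * (1 - α)) = ((α - 1) / α) ^ (1 - α) := by
    rw [Real.exp_mul, Real.exp_log hfrac]
  have e3 : Real.exp (Real.log δ + Real.log α) = δ * α := by
    rw [Real.exp_add, Real.exp_log hδ0, Real.exp_log hα0]
  have e4 : (α - 1) ^ (α - 1) / α ^ α * ((α - 1) / α) ^ (1 - α) = 1 / α := by
    rw [Real.div_rpow hα1.le hα0.le, div_mul_div_comm, ← Real.rpow_add hα1, ← Real.rpow_add hα0,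
      show α - 1 + (1 - α) = 0 by ring, show α + (1 - α) = 1 by ring, Real.rpow_zero,
      Real.rpow_one]
  have hd2 : (μ - μ') ^ 2 ≤ Δ ^ 2 := by
    calc (μ - μ') ^ 2 = |μ - μ'| ^ 2 := (sq_abs _).symm
      _ ≤ Δ ^ 2 := pow_le_pow_left₀ (abs_nonneg _) hadj 2
  have hE : α / 2 * ψ ^ 2 * (1 - α) + α * (α - 1) * (μ - μ') ^ 2 / (2 * σ ^ 2) ≤ 0 := by
    have h1 : α * (α - 1) * (μ - μ') ^ 2 / (2 * σ ^ 2) ≤ α * (α - 1) * Δ ^ 2 / (2 * σ ^ 2) := by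
      gcongr
    have h2 : α / 2 * ψ ^ 2 * (1 - α) = -(α * (α - 1) * Δ ^ 2 / (2 * σ ^ 2)) := by
      rw [hψ]; field_simp; ring
    linarith
  calc (α - 1) ^ (α - 1) / α ^ α * Real.exp ε ^ (1 - α) *
        Real.exp (α * (α - 1) * (μ - μ') ^ 2 / (2 * σ ^ 2))
      = ((α - 1) ^ (α - 1) / α ^ α * ((α - 1) / α) ^ (1 - α)) * (δ * α) *
          (Real.exp (α / 2 * ψ ^ 2 * (1 - α)) *
            Real.exp (α * (α - 1) * (μ - μ') ^ 2 / (2 * σ ^ 2))) := by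
        rw [e0, e1, Real.exp_add, Real.exp_add, e2, e3]; ring
    _ = δ * Real.exp (α / 2 * ψ ^ 2 * (1 - α) + α * (α - 1) * (μ - μ') ^ 2 / (2 * σ ^ 2)) := by
        rw [e4, ← Real.exp_add]
        field_simp
    _ ≤ δ * 1 := by
        apply mul_le_mul_of_nonneg_left _ hδ0.le
        exact Real.exp_le_one_iff.mpr hE
    _ = δ := mul_one δ

/-- improved RDP-to-DP conversion for the Gaussian mechanism. For
`σ > 0`, `Δ > 0`, `α > 1`, `δ ∈ (0,1)`, `|μ − μ'| ≤ Δ`, `ψ = Δ/σ` and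
`ε = (α/2)ψ² + log((α−1)/α) − (log δ + log α)/(α−1)`, the measures `P = N(μ, σ²)`,
`Q = N(μ', σ²)` satisfy `P(S) ≤ e^ε·Q(S) + δ` for every measurable `S`. -/
theorem gaussian_mechanism_rdp_to_dp_improved (σ Δ α δ μ μ' ψ ε : ℝ)
    (hσ : 0 < σ) (hΔ : 0 < Δ) (hα : 1 < α) (hδ : δ ∈ Set.Ioo (0 : ℝ) 1)
    (hadj : |μ - μ'| ≤ Δ) (hψ : ψ = Δ / σ)
    (hε : ε = α / 2 * ψ ^ 2 + Real.log ((α - 1) / α) -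
      (Real.log δ + Real.log α) / (α - 1)) :
    ∀ S : Set ℝ, MeasurableSet S →
      (gaussianReal μ ⟨σ ^ 2, sq_nonneg σ⟩) S ≤
        ENNReal.ofReal (Real.exp ε) * (gaussianReal μ' ⟨σ ^ 2, sq_nonneg σ⟩) S +
          ENNReal.ofReal δ := by
  intro S hS
  set v : NNReal := ⟨σ ^ 2, sq_nonneg σ⟩ with hvdef
  have hv : v ≠ 0 := by
    intro h
    have : (v : ℝ) = 0 := by rw [h]; simp
    have hv2 : (v : ℝ) = σ ^ 2 := rfl
    nlinarith [pow_pos hσ 2]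
  set m : ℝ := α * μ + (1 - α) * μ' with hmdef
  -- pointwise real bound
  have hpoint : ∀ x : ℝ, gaussianPDFReal μ v x ≤
      Real.exp ε * gaussianPDFReal μ' v x + δ * gaussianPDFReal m v x := by
    intro x
    have ha : 0 ≤ gaussianPDFReal μ v x := gaussianPDFReal_nonneg _ _ _
    have hb : 0 < gaussianPDFReal μ' v x := gaussianPDFReal_pos _ _ _ hv
    have h1 := aux_point hα (Real.exp_pos ε) ha hb (α := α)
    have h2 := aux_pdf_pow hσ μ μ' α x
    have h3 := aux_const hσ hΔ hα hδ.1 hadj hψ hε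
    have hm : 0 ≤ gaussianPDFReal m v x := gaussianPDFReal_nonneg _ _ _
    calc gaussianPDFReal μ v x
        ≤ Real.exp ε * gaussianPDFReal μ' v x + (α - 1) ^ (α - 1) / α ^ α *
            Real.exp ε ^ (1 - α) *
            (gaussianPDFReal μ v x ^ α * gaussianPDFReal μ' v x ^ (1 - α)) := h1
      _ = Real.exp ε * gaussianPDFReal μ' v x + ((α - 1) ^ (α - 1) / α ^ α *
            Real.exp ε ^ (1 - α) * Real.exp (α * (α - 1) * (μ - μ') ^ 2 / (2 * σ ^ 2))) *
            gaussianPDFReal m v x := by rw [h2]; ring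
      _ ≤ Real.exp ε * gaussianPDFReal μ' v x + δ * gaussianPDFReal m v x := by
          gcongr
  -- measure-theoretic assembly
  rw [gaussianReal_apply μ hv S, gaussianReal_apply μ' hv S]
  calc ∫⁻ x in S, gaussianPDF μ v x
      ≤ ∫⁻ x in S, (ENNReal.ofReal (Real.exp ε) * gaussianPDF μ' v x +
          ENNReal.ofReal δ * gaussianPDF m v x) := by
        apply lintegral_mono
        intro x
        simp only [gaussianPDF]
        rw [← ENNReal.ofReal_mul (Real.exp_pos ε).le,
          ← ENNReal.ofReal_mul hδ.1.le,
          ← ENNReal.ofReal_add (mul_nonneg (Real.exp_pos ε).le (gaussianPDFReal_nonneg _ _ _))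
            (mul_nonneg hδ.1.le (gaussianPDFReal_nonneg _ _ _))]
        exact ENNReal.ofReal_le_ofReal (hpoint x)
    _ = ENNReal.ofReal (Real.exp ε) * (∫⁻ x in S, gaussianPDF μ' v x) +
          ENNReal.ofReal δ * ∫⁻ x in S, gaussianPDF m v x := by
        rw [lintegral_add_left ((measurable_gaussianPDF μ' v).const_mul _),
          lintegral_const_mul _ (measurable_gaussianPDF μ' v),
          lintegral_const_mul _ (measurable_gaussianPDF m v)]
    _ ≤ ENNReal.ofReal (Real.exp ε) * (∫⁻ x in S, gaussianPDF μ' v x) +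
          ENNReal.ofReal δ * 1 := by
        gcongr
        calc ∫⁻ x in S, gaussianPDF m v x ≤ ∫⁻ x, gaussianPDF m v x :=
              setLIntegral_le_lintegral _ _
          _ = 1 := lintegral_gaussianPDF_eq_one m hv
    _ = ENNReal.ofReal (Real.exp ε) * (∫⁻ x in S, gaussianPDF μ' v x) + ENNReal.ofReal δ := by
        rw [mul_one]
end

section
/- Let σ > 0, Δ > 0, ε > 0 and δ ∈ [0,1], and set ψ = Δ/σ. Let P = N(0, σ²) and Q = N(Δ, σ²). Then the following are equivalent: (i) for every measurable set S ⊆ ℝ, both P(S) ≤ e^ε · Q(S) + δ and Q(S) ≤ e^ε · P(S) + δ; (ii) δ ≥ Φ(ψ/2 − ε/ψ) − e^ε · Φ(−ψ/2 − ε/ψ). In other words, the worst-case Gaussian mechanism with sensitivity index ψ is (ε, δ)-DP if and only if δ ≥ Φ(ψ/2 − ε/ψ) − e^ε·Φ(−ψ/2 − ε/ψ). -/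
open MeasureTheory ProbabilityTheory Real

lemma gaussian_Iic (σ a x : ℝ) (hσ : 0 < σ) :
    (gaussianReal a ⟨σ ^ 2, sq_nonneg σ⟩) (Set.Iic x) =
      ENNReal.ofReal (stdNormalCDF ((x - a) / σ)) := by
  have hmap : gaussianReal a ⟨σ ^ 2, sq_nonneg σ⟩ =
      Measure.map (fun y => σ * y + a) (gaussianReal 0 1) := by
    have hcomp : (fun y : ℝ => σ * y + a) = (fun z => z + a) ∘ (fun y => σ * y) := rfl
    rw [hcomp, ← Measure.map_map (by fun_prop) (by fun_prop),
      gaussianReal_map_const_mul, gaussianReal_map_add_const]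
    norm_num
    rfl
  have hpre : (fun y : ℝ => σ * y + a) ⁻¹' Set.Iic x = Set.Iic ((x - a) / σ) := by
    ext y
    simp only [Set.mem_preimage, Set.mem_Iic]
    rw [le_div_iff₀ hσ]
    constructor <;> intro h <;> nlinarith
  rw [hmap, Measure.map_apply (by fun_prop) measurableSet_Iic, hpre, stdNormalCDF,
    ENNReal.ofReal_toReal (measure_ne_top _ _)]

lemma gaussian_reflect (σ Δ a : ℝ) (hσ : 0 < σ) :
    Measure.map (fun x => Δ - x) (gaussianReal a ⟨σ ^ 2, sq_nonneg σ⟩) =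
      gaussianReal (Δ - a) ⟨σ ^ 2, sq_nonneg σ⟩ := by
  have hcomp : (fun x : ℝ => Δ - x) = (fun z => z + Δ) ∘ (fun x => (-1 : ℝ) * x) := by
    ext x; simp; ring
  rw [hcomp, ← Measure.map_map (by fun_prop) (by fun_prop)]
  erw [gaussianReal_map_const_mul, gaussianReal_map_add_const]
  norm_num
  rw [neg_add_eq_sub]
  congr 1; exact one_mul _

lemma density_sign (σ Δ ε x : ℝ) (hσ : 0 < σ) (hΔ : 0 < Δ) :
    x ≤ Δ / 2 - σ ^ 2 * ε / Δ ↔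
      Real.exp ε * gaussianPDFReal Δ ⟨σ ^ 2, sq_nonneg σ⟩ x ≤
        gaussianPDFReal 0 ⟨σ ^ 2, sq_nonneg σ⟩ x := by
  have hc : (0:ℝ) < (√(2 * π * σ ^ 2))⁻¹ := by
    have := Real.pi_pos
    positivity
  simp only [gaussianPDFReal]
  push_cast
  erw [NNReal.coe_mk]
  rw [mul_left_comm, mul_le_mul_iff_right₀ hc, ← Real.exp_add, Real.exp_le_exp]
  have h2s : (0:ℝ) < 2 * σ ^ 2 := by positivity
  have hiff : (ε + -(x - Δ) ^ 2 / (2 * σ ^ 2) ≤ -(x - 0) ^ 2 / (2 * σ ^ 2)) ↔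
      (0 : ℝ) ≤ (Δ ^ 2 - 2 * Δ * x) - ε * (2 * σ ^ 2) := by
    rw [← sub_nonneg, show -(x - 0) ^ 2 / (2 * σ ^ 2) - (ε + -(x - Δ) ^ 2 / (2 * σ ^ 2)) =
        ((Δ ^ 2 - 2 * Δ * x) - ε * (2 * σ ^ 2)) / (2 * σ ^ 2) from by field_simp; ring,
      le_div_iff₀ h2s, zero_mul]
  have hleft : x ≤ Δ / 2 - σ ^ 2 * ε / Δ ↔
      (0 : ℝ) ≤ (Δ ^ 2 - 2 * Δ * x) - ε * (2 * σ ^ 2) := by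
    rw [← sub_nonneg, show Δ / 2 - σ ^ 2 * ε / Δ - x =
        ((Δ ^ 2 - 2 * Δ * x) - ε * (2 * σ ^ 2)) / (2 * Δ) from by field_simp; ring,
      le_div_iff₀ (by positivity), zero_mul]
  rw [hleft, hiff]

lemma one_sided (σ Δ ε : ℝ) (hσ : 0 < σ) (hΔ : 0 < Δ) (hε : 0 < ε) {S : Set ℝ}
    (hS : MeasurableSet S) :
    ((gaussianReal 0 ⟨σ ^ 2, sq_nonneg σ⟩) S).toReal ≤
      Real.exp ε * ((gaussianReal Δ ⟨σ ^ 2, sq_nonneg σ⟩) S).toReal +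
        (((gaussianReal 0 ⟨σ ^ 2, sq_nonneg σ⟩) (Set.Iic (Δ / 2 - σ ^ 2 * ε / Δ))).toReal -
          Real.exp ε *
            ((gaussianReal Δ ⟨σ ^ 2, sq_nonneg σ⟩) (Set.Iic (Δ / 2 - σ ^ 2 * ε / Δ))).toReal) := by
  set v : NNReal := ⟨σ ^ 2, sq_nonneg σ⟩ with hvdef
  set t : ℝ := Δ / 2 - σ ^ 2 * ε / Δ with htdef
  have hv : v ≠ 0 := by
    simp only [hvdef, ne_eq, ← NNReal.coe_inj, NNReal.coe_zero, NNReal.coe_mk]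
    intro h; have h' : σ ^ 2 = 0 := congrArg Subtype.val h; exact absurd h' (by positivity)
  set p := gaussianPDFReal 0 v with hp
  set q := gaussianPDFReal Δ v with hq
  have hpI : Integrable p := integrable_gaussianPDFReal 0 v
  have hqI : Integrable q := integrable_gaussianPDFReal Δ v
  have hdI : Integrable (fun x => p x - Real.exp ε * q x) := hpI.sub (hqI.const_mul _)
  have hrepr : ∀ (a : ℝ) (A : Set ℝ), MeasurableSet A →
      ((gaussianReal a v) A).toReal = ∫ x in A, gaussianPDFReal a v x := by
    intro a A hA
    rw [gaussianReal_apply_eq_integral _ hv,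
      ENNReal.toReal_ofReal (setIntegral_nonneg hA fun x _ => gaussianPDFReal_nonneg _ _ _)]
  have hint : ∀ A : Set ℝ, MeasurableSet A →
      ∫ x in A, (p x - Real.exp ε * q x) =
        ((gaussianReal 0 v) A).toReal - Real.exp ε * ((gaussianReal Δ v) A).toReal := by
    intro A hA
    rw [integral_sub hpI.integrableOn ((hqI.const_mul _).integrableOn),
      integral_const_mul, hrepr 0 A hA, hrepr Δ A hA]
  have key : ∫ x in S, (p x - Real.exp ε * q x) ≤
      ∫ x in Set.Iic t, (p x - Real.exp ε * q x) := by
    have h1 : ∫ x in S, (p x - Real.exp ε * q x) ≤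
        ∫ x in S ∩ Set.Iic t, (p x - Real.exp ε * q x) := by
      rw [← integral_inter_add_diff measurableSet_Iic hdI.integrableOn]
      have : ∫ x in S \ Set.Iic t, (p x - Real.exp ε * q x) ≤ 0 := by
        apply setIntegral_nonpos (hS.diff measurableSet_Iic)
        intro x hx
        have hxt : ¬ x ≤ t := hx.2
        have := (density_sign σ Δ ε x hσ hΔ).not.mp hxt
        rw [not_le] at this
        simp only [hp, hq]
        linarith
      linarith
    have h2 : ∫ x in S ∩ Set.Iic t, (p x - Real.exp ε * q x) ≤
        ∫ x in Set.Iic t, (p x - Real.exp ε * q x) := by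
      apply setIntegral_mono_set hdI.integrableOn
      · filter_upwards [ae_restrict_mem measurableSet_Iic] with x hx
        have := (density_sign σ Δ ε x hσ hΔ).mp hx
        simp only [hp, hq, Pi.zero_apply]
        linarith
      · exact Set.inter_subset_right.eventuallyLE
    linarith
  rw [hint S hS, hint (Set.Iic t) measurableSet_Iic] at key
  linarith


/-- the Analytic Gaussian Mechanism. For `σ > 0`, `Δ > 0`, `ε > 0`,
`δ ∈ [0,1]`, `ψ = Δ/σ`, `P = N(0, σ²)` and `Q = N(Δ, σ²)`, the symmetric `(ε, δ)`-DP
condition (for all measurable `S`, `P(S) ≤ e^ε·Q(S) + δ` and `Q(S) ≤ e^ε·P(S) + δ`)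
holds if and only if `δ ≥ Φ(ψ/2 − ε/ψ) − e^ε·Φ(−ψ/2 − ε/ψ)`. -/
theorem analytic_gaussian_mechanism (σ Δ ε δ ψ : ℝ) (hσ : 0 < σ) (hΔ : 0 < Δ)
    (hε : 0 < ε) (hδ : δ ∈ Set.Icc (0 : ℝ) 1) (hψ : ψ = Δ / σ) :
    (∀ S : Set ℝ, MeasurableSet S →
        (gaussianReal 0 ⟨σ ^ 2, sq_nonneg σ⟩) S ≤
          ENNReal.ofReal (Real.exp ε) * (gaussianReal Δ ⟨σ ^ 2, sq_nonneg σ⟩) S +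
            ENNReal.ofReal δ ∧
        (gaussianReal Δ ⟨σ ^ 2, sq_nonneg σ⟩) S ≤
          ENNReal.ofReal (Real.exp ε) * (gaussianReal 0 ⟨σ ^ 2, sq_nonneg σ⟩) S +
            ENNReal.ofReal δ) ↔
      stdNormalCDF (ψ / 2 - ε / ψ) - Real.exp ε * stdNormalCDF (-ψ / 2 - ε / ψ) ≤ δ := by
  have hδ0 : (0:ℝ) ≤ δ := hδ.1
  set t : ℝ := Δ / 2 - σ ^ 2 * ε / Δ with htdef
  have hψpos : 0 < ψ := hψ ▸ div_pos hΔ hσ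
  have hΔ' : Δ ≠ 0 := ne_of_gt hΔ
  have hσ' : σ ≠ 0 := ne_of_gt hσ
  have h1 : (t - 0) / σ = ψ / 2 - ε / ψ := by
    subst hψ; rw [htdef]; field_simp; ring
  have h2 : (t - Δ) / σ = -ψ / 2 - ε / ψ := by
    subst hψ; rw [htdef]; field_simp; ring
  have hPI : (gaussianReal 0 ⟨σ ^ 2, sq_nonneg σ⟩) (Set.Iic t) =
      ENNReal.ofReal (stdNormalCDF (ψ / 2 - ε / ψ)) := by
    rw [gaussian_Iic σ 0 t hσ, h1]
  have hQI : (gaussianReal Δ ⟨σ ^ 2, sq_nonneg σ⟩) (Set.Iic t) =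
      ENNReal.ofReal (stdNormalCDF (-ψ / 2 - ε / ψ)) := by
    rw [gaussian_Iic σ Δ t hσ, h2]
  have hΦ : ∀ x, 0 ≤ stdNormalCDF x := fun x => ENNReal.toReal_nonneg
  constructor
  · intro h
    have h1' := (h (Set.Iic t) measurableSet_Iic).1
    rw [hPI, hQI, ← ENNReal.ofReal_mul (Real.exp_nonneg ε),
      ← ENNReal.ofReal_add (mul_nonneg (Real.exp_nonneg ε) (hΦ _)) hδ0] at h1'
    have := (ENNReal.ofReal_le_ofReal_iff
      (add_nonneg (mul_nonneg (Real.exp_nonneg ε) (hΦ _)) hδ0)).mp h1'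
    linarith
  · intro hK S hS
    have main : ∀ T : Set ℝ, MeasurableSet T →
        (gaussianReal 0 ⟨σ ^ 2, sq_nonneg σ⟩) T ≤
          ENNReal.ofReal (Real.exp ε) * (gaussianReal Δ ⟨σ ^ 2, sq_nonneg σ⟩) T +
            ENNReal.ofReal δ := by
      intro T hT
      have hr := one_sided σ Δ ε hσ hΔ hε hT
      rw [hPI, hQI, ENNReal.toReal_ofReal (hΦ _), ENNReal.toReal_ofReal (hΦ _)] at hr
      have hreal : ((gaussianReal 0 ⟨σ ^ 2, sq_nonneg σ⟩) T).toReal ≤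
          Real.exp ε * ((gaussianReal Δ ⟨σ ^ 2, sq_nonneg σ⟩) T).toReal + δ := by linarith
      calc (gaussianReal 0 ⟨σ ^ 2, sq_nonneg σ⟩) T
          = ENNReal.ofReal (((gaussianReal 0 ⟨σ ^ 2, sq_nonneg σ⟩) T).toReal) :=
            (ENNReal.ofReal_toReal (@measure_ne_top _ _ _ (@IsZeroOrProbabilityMeasure.toIsFiniteMeasure _ _ _ (@MeasureTheory.instIsZeroOrProbabilityMeasureOfIsProbabilityMeasure _ _ _ (instIsProbabilityMeasureGaussianReal _ _))) _)).symm
        _ ≤ ENNReal.ofReal (Real.exp ε * ((gaussianReal Δ ⟨σ ^ 2, sq_nonneg σ⟩) T).toReal + δ) :=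
            ENNReal.ofReal_le_ofReal hreal
        _ = ENNReal.ofReal (Real.exp ε * ((gaussianReal Δ ⟨σ ^ 2, sq_nonneg σ⟩) T).toReal) +
              ENNReal.ofReal δ := ENNReal.ofReal_add (by positivity) hδ0
        _ = ENNReal.ofReal (Real.exp ε) *
              ENNReal.ofReal (((gaussianReal Δ ⟨σ ^ 2, sq_nonneg σ⟩) T).toReal) +
              ENNReal.ofReal δ := by rw [ENNReal.ofReal_mul (Real.exp_nonneg ε)]
        _ = ENNReal.ofReal (Real.exp ε) * (gaussianReal Δ ⟨σ ^ 2, sq_nonneg σ⟩) T +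
              ENNReal.ofReal δ := by erw [ENNReal.ofReal_toReal (@measure_ne_top _ _ _ (@IsZeroOrProbabilityMeasure.toIsFiniteMeasure _ _ _ (@MeasureTheory.instIsZeroOrProbabilityMeasureOfIsProbabilityMeasure _ _ _ (instIsProbabilityMeasureGaussianReal _ _))) _)]
    refine ⟨main S hS, ?_⟩
    have hrS : MeasurableSet ((fun x : ℝ => Δ - x) ⁻¹' S) := hS.preimage (by fun_prop)
    have hQS : (gaussianReal Δ ⟨σ ^ 2, sq_nonneg σ⟩) S =
        (gaussianReal 0 ⟨σ ^ 2, sq_nonneg σ⟩) ((fun x : ℝ => Δ - x) ⁻¹' S) := by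
      conv_lhs => rw [show (gaussianReal Δ ⟨σ ^ 2, sq_nonneg σ⟩) =
        Measure.map (fun x : ℝ => Δ - x) (gaussianReal 0 ⟨σ ^ 2, sq_nonneg σ⟩) from by
          rw [gaussian_reflect σ Δ 0 hσ, sub_zero]]
      rw [Measure.map_apply (by fun_prop) hS]
    have hPS : (gaussianReal 0 ⟨σ ^ 2, sq_nonneg σ⟩) S =
        (gaussianReal Δ ⟨σ ^ 2, sq_nonneg σ⟩) ((fun x : ℝ => Δ - x) ⁻¹' S) := by
      conv_lhs => rw [show (gaussianReal 0 ⟨σ ^ 2, sq_nonneg σ⟩) =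
        Measure.map (fun x : ℝ => Δ - x) (gaussianReal Δ ⟨σ ^ 2, sq_nonneg σ⟩) from by
          rw [gaussian_reflect σ Δ Δ hσ, sub_self]]
      rw [Measure.map_apply (by fun_prop) hS]
    rw [hQS, hPS]
    exact main _ hrS
end

section
/- Let n ≥ 1 and v ∈ ℝⁿ, and let P = ⨂_{i=1}^n N(vᵢ, 1) and Q = ⨂_{i=1}^n N(0, 1) be product Gaussian measures on ℝⁿ. Then for every γ ≥ 0, the supremum over measurable sets S ⊆ ℝⁿ of P(S) − γ·Q(S) equals the supremum over measurable sets T ⊆ ℝ of N(‖v‖₂, 1)(T) − γ·N(0, 1)(T). Consequently, the n-fold composition of Gaussian mechanisms with sensitivity indices ψ₁, …, ψₙ has the same privacy profile as a single Gaussian mechanism with sensitivity index √(ψ₁² + ⋯ + ψₙ²), i.e., the composition is √(ψ₁² + ⋯ + ψₙ²)-GDP. -/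
open MeasureTheory ProbabilityTheory Real

section Auxiliary

open NNReal

lemma gaussianPDFReal_one_eq (a : ℝ) (x : ℝ) :
    gaussianPDFReal a 1 x = gaussianPDFReal 0 1 x * rexp (a * x - a ^ 2 / 2) := by
  simp only [gaussianPDFReal, NNReal.coe_one, mul_one, sub_zero]
  rw [mul_assoc, ← Real.exp_add]
  congr 1
  ring_nf

lemma gaussianReal_one_withDensity (a : ℝ) :
    gaussianReal a 1 = (gaussianReal 0 1).withDensity
      (fun x => ENNReal.ofReal (rexp (a * x - a ^ 2 / 2))) := by
  have h1 : (1 : ℝ≥0) ≠ 0 := one_ne_zero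
  rw [gaussianReal_of_var_ne_zero _ h1, gaussianReal_of_var_ne_zero _ h1,
    ← withDensity_mul _ (measurable_gaussianPDF 0 1)
      (by fun_prop : Measurable (fun x => ENNReal.ofReal (rexp (a * x - a ^ 2 / 2))))]
  congr 1
  ext x
  simp only [Pi.mul_apply, gaussianPDF]
  rw [← ENNReal.ofReal_mul (gaussianPDFReal_nonneg _ _ _), ← gaussianPDFReal_one_eq]

variable {α : Type*} [MeasurableSpace α]

lemma integrable_of_withDensity_prob (μ : Measure α) [IsProbabilityMeasure μ]
    (h : α → ℝ) (hh : Measurable h) (h0 : ∀ x, 0 ≤ h x)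
    [hp : IsProbabilityMeasure (μ.withDensity (fun x => ENNReal.ofReal (h x)))] :
    Integrable h μ := by
  refine ⟨hh.aestronglyMeasurable, ?_⟩
  rw [HasFiniteIntegral]
  have : ∀ x, (‖h x‖ₑ : ENNReal) = ENNReal.ofReal (h x) := fun x => by
    rw [Real.enorm_eq_ofReal (h0 x)]
  simp_rw [this]
  have := hp.measure_univ
  rw [withDensity_apply _ MeasurableSet.univ, setLIntegral_univ] at this
  simp [this]

lemma withDensity_toReal_eq (μ : Measure α) [IsProbabilityMeasure μ]
    (h : α → ℝ) (hh : Measurable h) (h0 : ∀ x, 0 ≤ h x)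
    [hp : IsProbabilityMeasure (μ.withDensity (fun x => ENNReal.ofReal (h x)))]
    (S : Set α) (hS : MeasurableSet S) :
    ((μ.withDensity (fun x => ENNReal.ofReal (h x))) S).toReal = ∫ x in S, h x ∂μ := by
  rw [withDensity_apply _ hS,
    ← ofReal_integral_eq_lintegral_ofReal
      ((integrable_of_withDensity_prob μ h hh h0).restrict) (ae_of_all _ h0),
    ENNReal.toReal_ofReal (integral_nonneg h0)]

lemma hockey_le (μ : Measure α) [IsProbabilityMeasure μ]
    (h : α → ℝ) (hh : Measurable h) (h0 : ∀ x, 0 ≤ h x)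
    [hp : IsProbabilityMeasure (μ.withDensity (fun x => ENNReal.ofReal (h x)))]
    (γ : ℝ) (hγ : 0 ≤ γ) (S : Set α) (hS : MeasurableSet S) :
    ((μ.withDensity (fun x => ENNReal.ofReal (h x))) S).toReal - γ * (μ S).toReal ≤
      ((μ.withDensity (fun x => ENNReal.ofReal (h x))) {x | γ < h x}).toReal
        - γ * (μ {x | γ < h x}).toReal := by
  have hA : MeasurableSet {x | γ < h x} := measurableSet_lt measurable_const hh
  set A := {x | γ < h x} with hAdef
  have hint : Integrable h μ := integrable_of_withDensity_prob μ h hh h0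
  have hintF : Integrable (fun x => h x - γ) μ := hint.sub (integrable_const γ)
  have key : ∀ (T : Set α), MeasurableSet T →
      ((μ.withDensity (fun x => ENNReal.ofReal (h x))) T).toReal - γ * (μ T).toReal
        = ∫ x in T, (h x - γ) ∂μ := by
    intro T hT
    rw [withDensity_toReal_eq μ h hh h0 T hT, integral_sub hint.restrict
      (integrable_const γ).restrict, setIntegral_const]
    simp only [smul_eq_mul, Measure.restrict_apply_univ, measureReal_def]
    ring
  rw [key S hS, key A hA]
  calc ∫ x in S, (h x - γ) ∂μ
      = (∫ x in S ∩ A, (h x - γ) ∂μ) + ∫ x in S \ A, (h x - γ) ∂μ :=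
        (integral_inter_add_diff hA hintF.integrableOn).symm
    _ ≤ ∫ x in S ∩ A, (h x - γ) ∂μ := by
        have : ∫ x in S \ A, (h x - γ) ∂μ ≤ 0 := by
          apply setIntegral_nonpos (hS.diff hA)
          intro x hx
          have : ¬ γ < h x := hx.2
          linarith [not_lt.mp this]
        linarith
    _ ≤ (∫ x in A ∩ S, (h x - γ) ∂μ) + ∫ x in A \ S, (h x - γ) ∂μ := by
        rw [Set.inter_comm]
        have : 0 ≤ ∫ x in A \ S, (h x - γ) ∂μ := by
          apply setIntegral_nonneg (hA.diff hS)
          intro x hx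
          have : γ < h x := hx.1
          linarith
        linarith
    _ = ∫ x in A, (h x - γ) ∂μ := integral_inter_add_diff hS hintF.integrableOn

lemma hockey_sup (μ ν : Measure α) [IsProbabilityMeasure μ] [IsProbabilityMeasure ν]
    (h : α → ℝ) (hh : Measurable h) (h0 : ∀ x, 0 ≤ h x)
    (hν : ν = μ.withDensity (fun x => ENNReal.ofReal (h x)))
    (γ : ℝ) (hγ : 0 ≤ γ) :
    (⨆ S : {S : Set α // MeasurableSet S}, (ν S.1).toReal - γ * (μ S.1).toReal) =
      (ν {x | γ < h x}).toReal - γ * (μ {x | γ < h x}).toReal := by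
  subst hν
  have hA : MeasurableSet {x | γ < h x} := measurableSet_lt measurable_const hh
  apply le_antisymm
  · exact ciSup_le fun S => hockey_le μ h hh h0 γ hγ S.1 S.2
  · exact le_ciSup ⟨_, by rintro _ ⟨S, rfl⟩; exact hockey_le μ h hh h0 γ hγ S.1 S.2⟩
      (⟨_, hA⟩ : {S : Set α // MeasurableSet S})

lemma conv_pdf (a b : ℝ≥0) (ha : a ≠ 0) (hb : b ≠ 0) (z : ℝ) :
    ∫ x, gaussianPDFReal 0 a x * gaussianPDFReal x b z = gaussianPDFReal 0 (a + b) z := by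
  have hA : 0 < (a : ℝ) := by exact_mod_cast pos_iff_ne_zero.mpr ha
  have hB : 0 < (b : ℝ) := by exact_mod_cast pos_iff_ne_zero.mpr hb
  set A := (a : ℝ)
  set B := (b : ℝ)
  have hAB : 0 < A + B := by linarith
  set c : ℝ := (A + B) / (2 * A * B) with hc_def
  have hc : 0 < c := by positivity
  set d : ℝ := A * z / (A + B) with hd_def
  set C : ℝ := (√(2 * π * A))⁻¹ * (√(2 * π * B))⁻¹ with hC_def
  set E : ℝ := -z ^ 2 / (2 * (A + B)) with hE_def
  have hpt : ∀ x : ℝ, gaussianPDFReal 0 A.toNNReal x * gaussianPDFReal x B.toNNReal z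
      = C * rexp E * rexp (-c * (x - d) ^ 2) := by
    intro x
    simp only [gaussianPDFReal, sub_zero]
    rw [Real.coe_toNNReal _ hA.le, Real.coe_toNNReal _ hB.le]
    rw [show (√(2 * π * A))⁻¹ * rexp (-x ^ 2 / (2 * A)) * ((√(2 * π * B))⁻¹
        * rexp (-(z - x) ^ 2 / (2 * B))) = C * (rexp (-x ^ 2 / (2 * A)) *
        rexp (-(z - x) ^ 2 / (2 * B))) from by rw [hC_def]; ring]
    rw [← Real.exp_add, mul_assoc C, ← Real.exp_add]
    congr 1
    congr 1
    rw [hE_def, hd_def, hc_def]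
    field_simp
    ring
  have hcast : ∀ x, gaussianPDFReal 0 a x * gaussianPDFReal x b z
      = C * rexp E * rexp (-c * (x - d) ^ 2) := by
    intro x
    have h1 : A.toNNReal = a := by simp [A]
    have h2 : B.toNNReal = b := by simp [B]
    rw [← h1, ← h2]; exact hpt x
  simp_rw [hcast]
  rw [integral_const_mul]
  have : ∫ x : ℝ, rexp (-c * (x - d) ^ 2) = ∫ x : ℝ, rexp (-c * x ^ 2) := by
    exact integral_sub_right_eq_self (fun x => rexp (-c * x ^ 2)) d
  rw [this, integral_gaussian]
  -- now algebra: C * rexp E * √(π / c) = gaussianPDFReal 0 (a+b) z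
  have hab : ((a + b : ℝ≥0) : ℝ) = A + B := by push_cast; ring
  simp only [gaussianPDFReal, sub_zero, hab]
  have h1 : π / c = (2 * π * A) * (2 * π * B) / (2 * π * (A + B)) := by
    rw [hc_def]; field_simp
  have s1 : √((2 * π * A) * (2 * π * B) / (2 * π * (A + B)))
      = √(2 * π * A) * √(2 * π * B) / √(2 * π * (A + B)) := by
    rw [Real.sqrt_div' _ (by positivity), Real.sqrt_mul (by positivity)]
  rw [h1, s1, hC_def, hE_def]
  have h2 : (0:ℝ) < √(2*π*A) := Real.sqrt_pos.mpr (by positivity)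
  have h3 : (0:ℝ) < √(2*π*B) := Real.sqrt_pos.mpr (by positivity)
  have h4 : (0:ℝ) < √(2*π*(A+B)) := Real.sqrt_pos.mpr (by positivity)
  field_simp


lemma gaussianPDFReal_le (μ : ℝ) (v : ℝ≥0) (x : ℝ) :
    gaussianPDFReal μ v x ≤ (√(2 * π * v))⁻¹ := by
  have hexp : rexp (-(x - μ)^2 / (2 * v)) ≤ 1 := by
    apply Real.exp_le_one_iff.mpr
    apply div_nonpos_of_nonpos_of_nonneg (neg_nonpos.mpr (sq_nonneg _)) (by positivity)
  calc gaussianPDFReal μ v x = (√(2 * π * v))⁻¹ * rexp (-(x - μ)^2 / (2 * v)) := rfl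
    _ ≤ (√(2 * π * v))⁻¹ * 1 := by
        apply mul_le_mul_of_nonneg_left hexp (by positivity)
    _ = (√(2 * π * v))⁻¹ := mul_one _

lemma conv_pdf_integrable (a b : ℝ≥0) (z : ℝ) :
    Integrable (fun x => gaussianPDFReal 0 a x * gaussianPDFReal x b z) := by
  have hfun : (fun x => gaussianPDFReal 0 a x * gaussianPDFReal x b z)
      = fun x => gaussianPDFReal 0 b (z - x) * gaussianPDFReal 0 a x := by
    ext x
    rw [gaussianPDFReal_sub, zero_add]
    ring
  rw [hfun]
  apply Integrable.bdd_mul (c := (√(2 * π * b))⁻¹) (integrable_gaussianPDFReal 0 a)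
  · exact ((measurable_gaussianPDFReal 0 b).comp
      (measurable_const.sub measurable_id)).aestronglyMeasurable
  · refine ae_of_all _ fun x => ?_
    rw [Real.norm_eq_abs, abs_of_nonneg (gaussianPDFReal_nonneg _ _ _)]
    exact gaussianPDFReal_le _ _ _

lemma gauss_conv_s17 (a b : ℝ≥0) :
    Measure.map (fun p : ℝ × ℝ => p.1 + p.2) ((gaussianReal 0 a).prod (gaussianReal 0 b))
      = gaussianReal 0 (a + b) := by
  by_cases ha : a = 0
  · subst ha
    rw [gaussianReal_zero_var, zero_add, Measure.dirac_prod,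
      Measure.map_map measurable_add measurable_prodMk_left]
    have : ((fun p : ℝ × ℝ => p.1 + p.2) ∘ Prod.mk (0:ℝ)) = id := by
      ext y; simp
    rw [this, Measure.map_id]
  by_cases hb : b = 0
  · subst hb
    rw [gaussianReal_zero_var, add_zero, Measure.prod_dirac,
      Measure.map_map measurable_add (show Measurable fun x : ℝ => (x, (0:ℝ)) from measurable_id.prodMk measurable_const)]
    have : ((fun p : ℝ × ℝ => p.1 + p.2) ∘ (fun x : ℝ => (x, (0:ℝ)))) = id := by
      ext y; simp
    rw [this, Measure.map_id]
  have hab : a + b ≠ 0 := by simp [ha]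
  have hF : Measurable (fun p : ℝ × ℝ => gaussianPDF p.1 b p.2) := by
    have heq : (fun p : ℝ × ℝ => gaussianPDF p.1 b p.2)
        = fun p : ℝ × ℝ => ENNReal.ofReal (gaussianPDFReal 0 b (p.2 - p.1)) := by
      ext p
      rw [gaussianPDF, gaussianPDFReal_sub p.2 p.1, zero_add]
    rw [heq]
    exact ((measurable_gaussianPDFReal 0 b).comp
      (measurable_snd.sub measurable_fst)).ennreal_ofReal
  ext s hs
  rw [Measure.map_apply measurable_add hs, Measure.prod_apply (measurable_add hs)]
  have h1 : ∀ x : ℝ, (gaussianReal 0 b) (Prod.mk x ⁻¹' ((fun p : ℝ × ℝ => p.1 + p.2) ⁻¹' s))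
      = ∫⁻ z in s, gaussianPDF x b z := by
    intro x
    have : Prod.mk x ⁻¹' ((fun p : ℝ × ℝ => p.1 + p.2) ⁻¹' s) = (fun y => x + y) ⁻¹' s := rfl
    rw [this, ← Measure.map_apply (measurable_const_add x) hs, gaussianReal_map_const_add,
      zero_add, gaussianReal_apply _ hb]
  simp_rw [h1]
  have hinner : Measurable fun x : ℝ => ∫⁻ z, gaussianPDF x b z ∂(volume.restrict s) :=
    Measurable.lintegral_prod_right' hF
  rw [gaussianReal_of_var_ne_zero _ ha,
    lintegral_withDensity_eq_lintegral_mul _ (measurable_gaussianPDF 0 a) hinner]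
  simp only [Pi.mul_apply]
  have h2 : ∀ x : ℝ, gaussianPDF 0 a x * ∫⁻ z in s, gaussianPDF x b z
      = ∫⁻ z in s, gaussianPDF 0 a x * gaussianPDF x b z := by
    intro x
    rw [lintegral_const_mul _ (measurable_gaussianPDF x b)]
  simp_rw [h2]
  rw [lintegral_lintegral_swap
    (((measurable_gaussianPDF 0 a).comp measurable_fst).mul hF).aemeasurable]
  have h3 : ∀ z : ℝ, ∫⁻ x, gaussianPDF 0 a x * gaussianPDF x b z = gaussianPDF 0 (a + b) z := by
    intro z
    simp_rw [gaussianPDF, ← ENNReal.ofReal_mul (gaussianPDFReal_nonneg 0 a _)]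
    rw [← ofReal_integral_eq_lintegral_ofReal (conv_pdf_integrable a b z)
      (ae_of_all _ fun x => mul_nonneg (gaussianPDFReal_nonneg _ _ _)
        (gaussianPDFReal_nonneg _ _ _)), conv_pdf a b ha hb z]
  simp_rw [h3]
  exact (gaussianReal_apply _ hab s).symm

lemma lintegral_pi_prod : ∀ (n : ℕ) (μ : Fin n → Measure ℝ), (∀ i, SigmaFinite (μ i)) →
    ∀ (f : Fin n → ℝ → ENNReal), (∀ i, Measurable (f i)) →
    ∫⁻ x, ∏ i, f i (x i) ∂Measure.pi μ = ∏ i, ∫⁻ t, f i t ∂μ i := by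
  intro n
  induction n with
  | zero =>
      intro μ _ f _
      simp
  | succ n ih =>
      intro μ hσ f hf
      have hmp := measurePreserving_piFinSuccAbove μ 0
      set e := MeasurableEquiv.piFinSuccAbove (fun _ : Fin (n+1) => ℝ) 0 with he
      have hG : Measurable fun p : ℝ × (Fin n → ℝ) => f 0 p.1 * ∏ j, f j.succ (p.2 j) := by
        apply Measurable.mul
        · exact (hf 0).comp measurable_fst
        · exact (Finset.measurable_prod _ fun j _ =>
            (hf j.succ).comp ((measurable_pi_apply j).comp measurable_snd))
      have h1 : ∫⁻ x, ∏ i, f i (x i) ∂Measure.pi μ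
          = ∫⁻ p, f 0 p.1 * ∏ j, f j.succ (p.2 j)
              ∂((μ 0).prod (Measure.pi fun j : Fin n => μ (Fin.succAbove 0 j))) := by
        rw [← hmp.map_eq, lintegral_map hG e.measurable]
        congr 1
        ext x
        rw [Fin.prod_univ_succ]
        congr 1
      rw [h1, lintegral_prod_mul (f := f 0) (g := fun y : Fin n → ℝ => ∏ j, f j.succ (y j))
        ((hf 0).aemeasurable)
        (Finset.measurable_prod _ fun j _ =>
          (hf j.succ).comp (measurable_pi_apply j)).aemeasurable]
      rw [ih _ (fun j => hσ _) _ (fun j => hf j.succ), Fin.prod_univ_succ]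
      congr 1


lemma map_sum_gauss : ∀ (n : ℕ) (u : Fin n → ℝ),
    (Measure.pi fun _ : Fin n => gaussianReal 0 1).map (fun x => ∑ i, u i * x i)
      = gaussianReal 0 (∑ i, u i ^ 2).toNNReal := by
  intro n
  induction n with
  | zero =>
      intro u
      have : (fun x : Fin 0 → ℝ => ∑ i, u i * x i) = fun _ => (0:ℝ) := by
        ext x; simp
      rw [this, Measure.map_const]
      simp [Real.toNNReal_zero]
  | succ n ih =>
      intro u
      have hmp := measurePreserving_piFinSuccAbove
        (fun _ : Fin (n+1) => gaussianReal 0 (1:ℝ≥0)) 0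
      set e := MeasurableEquiv.piFinSuccAbove (fun _ : Fin (n+1) => ℝ) 0 with he
      have hcomp : (fun x : Fin (n+1) → ℝ => ∑ i, u i * x i)
          = (fun p : ℝ × (Fin n → ℝ) => u 0 * p.1 + ∑ j, u j.succ * p.2 j) ∘ e := by
        ext x
        simp only [Function.comp_apply]
        rw [Fin.sum_univ_succ]
        rfl
      have hg : Measurable fun p : ℝ × (Fin n → ℝ) => u 0 * p.1 + ∑ j, u j.succ * p.2 j := by
        apply Measurable.add
        · exact measurable_fst.const_mul _
        · exact Finset.measurable_sum _ fun j _ =>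
            ((measurable_pi_apply j).comp measurable_snd).const_mul _
      rw [hcomp, ← Measure.map_map hg e.measurable, hmp.map_eq]
      -- now decompose: the function equals add ∘ Prod.map
      have hsplit : (fun p : ℝ × (Fin n → ℝ) => u 0 * p.1 + ∑ j, u j.succ * p.2 j)
          = (fun q : ℝ × ℝ => q.1 + q.2) ∘
            (Prod.map (fun t : ℝ => u 0 * t) (fun y : Fin n → ℝ => ∑ j, u j.succ * y j)) := rfl
      have hm1 : Measurable fun t : ℝ => u 0 * t := measurable_id.const_mul _
      have hm2 : Measurable fun y : Fin n → ℝ => ∑ j, u j.succ * y j :=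
        Finset.measurable_sum _ fun j _ => (measurable_pi_apply j).const_mul _
      rw [hsplit, ← Measure.map_map measurable_add (hm1.prodMap hm2),
        ← Measure.map_prod_map _ _ hm1 hm2]
      rw [show ((gaussianReal 0 1).map fun t : ℝ => u 0 * t)
          = gaussianReal 0 (⟨(u 0)^2, sq_nonneg _⟩ * 1) from by
          rw [gaussianReal_map_const_mul (u 0), mul_zero]; rfl]
      rw [ih (fun j => u j.succ), gauss_conv_s17]
      congr 1
      ext
      push_cast [NNReal.coe_mk]
      rw [Real.coe_toNNReal _ (Finset.sum_nonneg fun j _ => sq_nonneg _),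
        Real.coe_toNNReal _ (Finset.sum_nonneg fun j _ => sq_nonneg _)]
      rw [Fin.sum_univ_succ]
      change (u 0 ^ 2 * 1 : ℝ) + _ = _
      ring



lemma key_pi (n : ℕ) (v : Fin n → ℝ) :
    Measure.pi (fun i => gaussianReal (v i) 1)
      = (Measure.pi fun _ : Fin n => gaussianReal 0 1).withDensity
          (fun x => ∏ i, ENNReal.ofReal (rexp (v i * x i - v i ^ 2 / 2))) := by
  apply Measure.pi_eq
  intro s hs
  rw [withDensity_apply _ (MeasurableSet.univ_pi hs)]
  have hφ : ∀ i : Fin n, Measurable fun t : ℝ => ENNReal.ofReal (rexp (v i * t - v i ^ 2 / 2)) :=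
    fun i => by fun_prop
  have hind : (Set.indicator (Set.univ.pi s) (fun x : Fin n → ℝ =>
        ∏ i, ENNReal.ofReal (rexp (v i * x i - v i ^ 2 / 2))))
      = fun x => ∏ i, ((s i).indicator
          (fun t => ENNReal.ofReal (rexp (v i * t - v i ^ 2 / 2)))) (x i) := by
    ext x
    by_cases hx : x ∈ Set.univ.pi s
    · rw [Set.indicator_of_mem hx]
      exact Finset.prod_congr rfl fun i _ =>
        (Set.indicator_of_mem (hx i (Set.mem_univ i))
          (fun t => ENNReal.ofReal (rexp (v i * t - v i ^ 2 / 2)))).symm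
    · rw [Set.indicator_of_notMem hx]
      obtain ⟨i, -, hi⟩ := Set.mem_pi.not.mp hx |> fun h => by
        push_neg at h; exact h
      exact (Finset.prod_eq_zero (Finset.mem_univ i)
        (Set.indicator_of_notMem hi _)).symm
  rw [← lintegral_indicator (MeasurableSet.univ_pi hs) _, hind, lintegral_pi_prod n _ (fun _ => inferInstance) _
    (fun i => (hφ i).indicator (hs i))]
  refine Finset.prod_congr rfl fun i _ => ?_
  rw [lintegral_indicator (hs i) _, ← withDensity_apply _ (hs i),
    ← gaussianReal_one_withDensity (v i)]





lemma prob_sup_eq_max {α : Type*} [MeasurableSpace α] (μ : Measure α) [IsProbabilityMeasure μ]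
    (γ : ℝ) :
    (⨆ S : {S : Set α // MeasurableSet S}, ((μ S.1).toReal - γ * (μ S.1).toReal))
      = max (1 - γ) 0 := by
  have hle : ∀ S : {S : Set α // MeasurableSet S},
      (μ S.1).toReal - γ * (μ S.1).toReal ≤ max (1 - γ) 0 := by
    intro S
    have h01 : 0 ≤ (μ S.1).toReal := ENNReal.toReal_nonneg
    have h11 : (μ S.1).toReal ≤ 1 := by
      simpa using ENNReal.toReal_mono ENNReal.one_ne_top prob_le_one
    have heq : (μ S.1).toReal - γ * (μ S.1).toReal = (1 - γ) * (μ S.1).toReal := by ring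
    rw [heq]
    rcases le_total 0 (1 - γ) with h|h
    · exact le_trans (by nlinarith) (le_max_left _ _)
    · exact le_trans (by nlinarith) (le_max_right _ _)
  have hbdd : BddAbove (Set.range fun S : {S : Set α // MeasurableSet S} =>
      (μ S.1).toReal - γ * (μ S.1).toReal) := ⟨max (1 - γ) 0, by rintro x ⟨S, rfl⟩; exact hle S⟩
  apply le_antisymm (ciSup_le hle)
  apply max_le
  · have := le_ciSup hbdd (⟨Set.univ, MeasurableSet.univ⟩ : {S : Set α // MeasurableSet S})
    simpa [measure_univ] using this
  · have := le_ciSup hbdd (⟨∅, MeasurableSet.empty⟩ : {S : Set α // MeasurableSet S})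
    simpa using this



end Auxiliary

/-- composition of Gaussian mechanisms. For `n ≥ 1`, `v ∈ ℝⁿ`,
`P = ⨂ᵢ N(vᵢ, 1)`, `Q = ⨂ᵢ N(0, 1)` and `γ ≥ 0`, the hockey-stick divergence
`sup_S (P(S) − γ·Q(S))` over measurable `S ⊆ ℝⁿ` equals the corresponding supremum
`sup_T (N(‖v‖₂, 1)(T) − γ·N(0,1)(T))` over measurable `T ⊆ ℝ`: the `n`-fold composition
of Gaussian mechanisms with sensitivity indices `v₁, …, vₙ` has the same privacy profile
as a single Gaussian mechanism with sensitivity index `‖v‖₂ = √(v₁² + ⋯ + vₙ²)`, i.e. it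
is `√(v₁² + ⋯ + vₙ²)`-GDP. -/
theorem gaussian_composition_privacy_profile (n : ℕ) (hn : 1 ≤ n) (v : Fin n → ℝ)
    (γ : ℝ) (hγ : 0 ≤ γ) :
    (⨆ S : {S : Set (Fin n → ℝ) // MeasurableSet S},
        ((Measure.pi fun i => gaussianReal (v i) 1) S.1).toReal -
          γ * ((Measure.pi fun _ => gaussianReal 0 1) S.1).toReal) =
      ⨆ T : {T : Set ℝ // MeasurableSet T},
        ((gaussianReal (Real.sqrt (∑ i, v i ^ 2)) 1) T.1).toReal -
          γ * ((gaussianReal 0 1) T.1).toReal := by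
  by_cases hv : ∀ i, v i = 0
  · have h1 : (fun i : Fin n => gaussianReal (v i) 1) = fun _ : Fin n => gaussianReal 0 1 := by
      funext i; rw [hv i]
    have h2 : Real.sqrt (∑ i, v i ^ 2) = 0 := by
      have : ∑ i, v i ^ 2 = 0 := Finset.sum_eq_zero fun i _ => by rw [hv i]; ring
      rw [this, Real.sqrt_zero]
    rw [h1, h2, prob_sup_eq_max _ γ, prob_sup_eq_max _ γ]
  · push_neg at hv
    obtain ⟨i₀, hi₀⟩ := hv
    set m := Real.sqrt (∑ i, v i ^ 2) with hm_def
    have hsum_pos : 0 < ∑ i, v i ^ 2 :=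
      Finset.sum_pos' (fun j _ => sq_nonneg _) ⟨i₀, Finset.mem_univ i₀, by positivity⟩
    have hm : 0 < m := Real.sqrt_pos.mpr hsum_pos
    have hm2 : m ^ 2 = ∑ i, v i ^ 2 := Real.sq_sqrt hsum_pos.le
    set u : Fin n → ℝ := fun i => v i / m with hu_def
    set T : (Fin n → ℝ) → ℝ := fun x => ∑ i, u i * x i with hT_def
    have hTmeas : Measurable T :=
      Finset.measurable_sum _ fun i _ => (measurable_pi_apply i).const_mul _
    have hu2 : ∑ i, u i ^ 2 = 1 := by
      simp_rw [hu_def, div_pow]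
      rw [← Finset.sum_div, ← hm2]
      field_simp
    have hmap : (Measure.pi fun _ : Fin n => gaussianReal 0 1).map T = gaussianReal 0 1 := by
      rw [hT_def, map_sum_gauss n u, hu2]
      norm_num
    have hdens : ∀ x, (∏ i, ENNReal.ofReal (rexp (v i * x i - v i ^ 2 / 2)))
        = ENNReal.ofReal (rexp (m * T x - m ^ 2 / 2)) := by
      intro x
      rw [← ENNReal.ofReal_prod_of_nonneg (fun i _ => (Real.exp_pos _).le), ← Real.exp_sum]
      congr 2
      have h4 : ∑ i, v i * x i = m * T x := by
        rw [hT_def, Finset.mul_sum]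
        refine Finset.sum_congr rfl fun i _ => ?_
        rw [hu_def]
        field_simp
      have h3 : ∑ i, v i ^ 2 / 2 = m ^ 2 / 2 := by
        rw [← Finset.sum_div, ← hm2]
      rw [Finset.sum_sub_distrib, h4, h3]
    have hP : Measure.pi (fun i => gaussianReal (v i) 1)
        = (Measure.pi fun _ : Fin n => gaussianReal 0 1).withDensity
            (fun x => ENNReal.ofReal (rexp (m * T x - m ^ 2 / 2))) := by
      rw [key_pi n v]
      congr 1
      funext x
      exact hdens x
    have h1meas : Measurable fun t : ℝ => rexp (m * t - m ^ 2 / 2) :=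
      Real.measurable_exp.comp ((measurable_id.const_mul m).sub measurable_const)
    have hnmeas : Measurable fun x : Fin n → ℝ => rexp (m * T x - m ^ 2 / 2) :=
      Real.measurable_exp.comp ((hTmeas.const_mul m).sub measurable_const)
    rw [hockey_sup (Measure.pi fun _ : Fin n => gaussianReal 0 1)
        (Measure.pi fun i => gaussianReal (v i) 1) _ hnmeas (fun x => (Real.exp_pos _).le)
        hP γ hγ,
      hockey_sup (gaussianReal 0 1) (gaussianReal m 1) _ h1meas (fun t => (Real.exp_pos _).le)
        (gaussianReal_one_withDensity m) γ hγ]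
    set B : Set ℝ := {t | γ < rexp (m * t - m ^ 2 / 2)} with hB_def
    have hB : MeasurableSet B := measurableSet_lt measurable_const h1meas
    have hAB : {x : Fin n → ℝ | γ < rexp (m * T x - m ^ 2 / 2)} = T ⁻¹' B := rfl
    have hQ : (Measure.pi fun _ : Fin n => gaussianReal 0 1)
        {x | γ < rexp (m * T x - m ^ 2 / 2)} = gaussianReal 0 1 B := by
      rw [hAB, ← Measure.map_apply hTmeas hB, hmap]
    have hPA : (Measure.pi fun i => gaussianReal (v i) 1)
        {x | γ < rexp (m * T x - m ^ 2 / 2)} = gaussianReal m 1 B := by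
      calc (Measure.pi fun i => gaussianReal (v i) 1) {x | γ < rexp (m * T x - m ^ 2 / 2)}
          = ∫⁻ x in T ⁻¹' B, ENNReal.ofReal (rexp (m * T x - m ^ 2 / 2))
              ∂(Measure.pi fun _ : Fin n => gaussianReal 0 1) := by
            rw [hP, hAB, withDensity_apply _ (hTmeas hB)]
        _ = ∫⁻ t in B, ENNReal.ofReal (rexp (m * t - m ^ 2 / 2))
              ∂((Measure.pi fun _ : Fin n => gaussianReal 0 1).map T) :=
            (setLIntegral_map hB h1meas.ennreal_ofReal hTmeas).symm
        _ = ∫⁻ t in B, ENNReal.ofReal (rexp (m * t - m ^ 2 / 2)) ∂(gaussianReal 0 1) := by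
            rw [hmap]
        _ = gaussianReal m 1 B := by
            rw [gaussianReal_one_withDensity m, withDensity_apply _ hB]
    rw [hQ, hPA]
end
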